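/- arXiv:1108.4087 — 2 statements merged into one kernel-verified Lean document; each statement's English description precedes it below -/
import Mathlib

section
/- If f is bi-univalent on 𝔻 with 1+zf''(z)/f'(z) ≺ φ(z) and 1+wg''(w)/g'(w) ≺ φ(w) for g=f⁻¹, where φ(z)=1+B₁z+B₂z²+⋯ with B₁>0 and B₁²+2B₁−2B₂≠0, then |a₂| ≤ B₁√B₁/√(2|B₁²+2B₁−2B₂|) and |a₃| ≤ (1/2)(B₁+|B₂−B₁|). -/
open Metric Complex Filter Topology

lemma aderiv {h : ℂ → ℂ} {x : ℂ} (hh : AnalyticAt ℂ h x) : AnalyticAt ℂ (deriv h) x :=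
  (AnalyticOnNhd.deriv (s := {y | AnalyticAt ℂ h y}) (fun _ hy => hy)) x hh

lemma inv_derivs {f g : ℂ → ℂ} (hf : AnalyticOnNhd ℂ f (ball (0:ℂ) 1))
    (hg : AnalyticOnNhd ℂ g (ball (0:ℂ) 1)) (hf0 : f 0 = 0) (hf1 : deriv f 0 = 1)
    (hinv : ∀ᶠ z in 𝓝 (0:ℂ), g (f z) = z) :
    deriv g 0 = 1 ∧ deriv (deriv g) 0 = - deriv (deriv f) 0 ∧
      deriv (deriv (deriv g)) 0 = 3 * (deriv (deriv f) 0)^2 - deriv (deriv (deriv f)) 0 := by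
  have h0 : (0:ℂ) ∈ ball (0:ℂ) 1 := mem_ball_self one_pos
  have hz : ∀ᶠ z in 𝓝 (0:ℂ), z ∈ ball (0:ℂ) 1 := isOpen_ball.eventually_mem h0
  have hfb : ∀ᶠ z in 𝓝 (0:ℂ), f z ∈ ball (0:ℂ) 1 :=
    (hf 0 h0).continuousAt.eventually_mem (isOpen_ball.mem_nhds (by rw [hf0]; exact h0))
  have E1 : ∀ᶠ z in 𝓝 (0:ℂ), deriv g (f z) * deriv f z = 1 := by
    have hD : deriv (fun z => g (f z)) =ᶠ[𝓝 (0:ℂ)] deriv (fun z => z) :=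
      Filter.EventuallyEq.deriv hinv
    filter_upwards [hD, hz, hfb] with z h1 h2 h3
    have hd : HasDerivAt (fun w => g (f w)) (deriv g (f z) * deriv f z) z :=
      ((hg (f z) h3).differentiableAt.hasDerivAt).comp z ((hf z h2).differentiableAt.hasDerivAt)
    rw [← hd.deriv, h1, deriv_id'']
  have hg1 : deriv g 0 = 1 := by
    have := E1.self_of_nhds
    rw [hf0, hf1, mul_one] at this; exact this
  have E2 : ∀ᶠ z in 𝓝 (0:ℂ), deriv (deriv g) (f z) * deriv f z * deriv f z
      + deriv g (f z) * deriv (deriv f) z = 0 := by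
    have hD : deriv (fun z => deriv g (f z) * deriv f z) =ᶠ[𝓝 (0:ℂ)] deriv (fun _ => (1:ℂ)) :=
      Filter.EventuallyEq.deriv E1
    filter_upwards [hD, hz, hfb] with z h1 h2 h3
    have hA : HasDerivAt (fun w => deriv g (f w)) (deriv (deriv g) (f z) * deriv f z) z :=
      ((aderiv (hg (f z) h3)).differentiableAt.hasDerivAt).comp z
        ((hf z h2).differentiableAt.hasDerivAt)
    have hB : HasDerivAt (deriv f) (deriv (deriv f) z) z :=
      (aderiv (hf z h2)).differentiableAt.hasDerivAt
    have hd : HasDerivAt (fun w => deriv g (f w) * deriv f w) _ z := hA.mul hB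
    rw [← hd.deriv, h1, deriv_const]
  have hg2 : deriv (deriv g) 0 = - deriv (deriv f) 0 := by
    have := E2.self_of_nhds
    rw [hf0, hf1, hg1] at this
    linear_combination this
  have E3 : deriv (fun z => deriv (deriv g) (f z) * deriv f z * deriv f z
      + deriv g (f z) * deriv (deriv f) z) 0 = 0 := by
    rw [Filter.EventuallyEq.deriv_eq E2, deriv_const]
  have hA : HasDerivAt (fun w => deriv (deriv g) (f w))
      (deriv (deriv (deriv g)) (f 0) * deriv f 0) 0 :=
    ((aderiv (aderiv (hg (f 0) (by rw [hf0]; exact h0)))).differentiableAt.hasDerivAt).comp 0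
      ((hf 0 h0).differentiableAt.hasDerivAt)
  have hB : HasDerivAt (deriv f) (deriv (deriv f) 0) 0 :=
    (aderiv (hf 0 h0)).differentiableAt.hasDerivAt
  have hC : HasDerivAt (fun w => deriv g (f w)) (deriv (deriv g) (f 0) * deriv f 0) 0 :=
    ((aderiv (hg (f 0) (by rw [hf0]; exact h0))).differentiableAt.hasDerivAt).comp 0
      ((hf 0 h0).differentiableAt.hasDerivAt)
  have hD : HasDerivAt (deriv (deriv f)) (deriv (deriv (deriv f)) 0) 0 :=
    (aderiv (aderiv (hf 0 h0))).differentiableAt.hasDerivAt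
  have hfull : HasDerivAt (fun z => deriv (deriv g) (f z) * deriv f z * deriv f z
      + deriv g (f z) * deriv (deriv f) z) _ 0 := ((hA.mul hB).mul hB).add (hC.mul hD)
  rw [hfull.deriv] at E3
  simp only [Pi.mul_apply] at E3
  rw [hf0, hf1, hg1, hg2] at E3
  refine ⟨hg1, hg2, by linear_combination E3⟩

lemma sub_coeffs {F U φ : ℂ → ℂ} (hF : AnalyticOnNhd ℂ F (ball (0:ℂ) 1))
    (hφ : AnalyticOnNhd ℂ φ (ball (0:ℂ) 1)) (hU : AnalyticOnNhd ℂ U (ball (0:ℂ) 1))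
    (hF1 : deriv F 0 = 1) (hU0 : U 0 = 0)
    (hUmem : ∀ z ∈ ball (0:ℂ) 1, U z ∈ ball (0:ℂ) 1) (hφ0 : φ 0 = 1)
    (heq : ∀ z ∈ ball (0:ℂ) 1, 1 + z * iteratedDeriv 2 F z / deriv F z = φ (U z)) :
    deriv (deriv F) 0 = deriv φ 0 * deriv U 0 ∧
    2 * deriv (deriv (deriv F)) 0 = deriv (deriv φ) 0 * (deriv U 0)^2
      + deriv φ 0 * deriv (deriv U) 0 + 2 * (deriv φ 0 * deriv U 0) * deriv (deriv F) 0 := by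
  have i2 : iteratedDeriv 2 F = deriv (deriv F) := by rw [iteratedDeriv_succ, iteratedDeriv_one]
  have h0 : (0:ℂ) ∈ ball (0:ℂ) 1 := mem_ball_self one_pos
  have hz : ∀ᶠ z in 𝓝 (0:ℂ), z ∈ ball (0:ℂ) 1 := isOpen_ball.eventually_mem h0
  have hUb : ∀ᶠ z in 𝓝 (0:ℂ), U z ∈ ball (0:ℂ) 1 := by
    filter_upwards [hz] with z h1; exact hUmem z h1
  have hFne : ∀ᶠ z in 𝓝 (0:ℂ), deriv F z ≠ 0 :=
    (aderiv (hF 0 h0)).continuousAt.eventually_ne (by rw [hF1]; exact one_ne_zero)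
  have E1 : ∀ᶠ z in 𝓝 (0:ℂ), z * deriv (deriv F) z = (φ (U z) - 1) * deriv F z := by
    filter_upwards [hz, hFne] with z h1 h2
    have h3 := heq z h1
    rw [i2] at h3
    field_simp at h3 ⊢
    linear_combination h3
  have E2 : ∀ᶠ z in 𝓝 (0:ℂ), 1 * deriv (deriv F) z + z * deriv (deriv (deriv F)) z
      = deriv φ (U z) * deriv U z * deriv F z + (φ (U z) - 1) * deriv (deriv F) z := by
    have hD : deriv (fun z => z * deriv (deriv F) z)
        =ᶠ[𝓝 (0:ℂ)] deriv (fun z => (φ (U z) - 1) * deriv F z) := Filter.EventuallyEq.deriv E1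
    filter_upwards [hD, hz, hUb] with z h1 h2 h3
    have hL : HasDerivAt (fun w => w * deriv (deriv F) w)
        (1 * deriv (deriv F) z + z * deriv (deriv (deriv F)) z) z :=
      (hasDerivAt_id z).mul (aderiv (aderiv (hF z h2))).differentiableAt.hasDerivAt
    have hR : HasDerivAt (fun w => (φ (U w) - 1) * deriv F w)
        (deriv φ (U z) * deriv U z * deriv F z + (φ (U z) - 1) * deriv (deriv F) z) z := by
      have hcomp : HasDerivAt (fun w => φ (U w) - 1) (deriv φ (U z) * deriv U z) z :=
        (((hφ (U z) h3).differentiableAt.hasDerivAt).comp z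
          ((hU z h2).differentiableAt.hasDerivAt)).sub_const 1
      exact hcomp.mul (aderiv (hF z h2)).differentiableAt.hasDerivAt
    rw [← hL.deriv, h1, hR.deriv]
  have c1eq : deriv (deriv F) 0 = deriv φ 0 * deriv U 0 := by
    have h := E2.self_of_nhds
    rw [hU0, hφ0, hF1] at h
    linear_combination h
  have E3 : deriv (fun z => 1 * deriv (deriv F) z + z * deriv (deriv (deriv F)) z) 0
      = deriv (fun z => deriv φ (U z) * deriv U z * deriv F z
        + (φ (U z) - 1) * deriv (deriv F) z) 0 := Filter.EventuallyEq.deriv_eq E2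
  have hU0' : U 0 ∈ ball (0:ℂ) 1 := by rw [hU0]; exact h0
  have hdU : HasDerivAt U (deriv U 0) 0 := (hU 0 h0).differentiableAt.hasDerivAt
  have hL : HasDerivAt (fun z => 1 * deriv (deriv F) z + z * deriv (deriv (deriv F)) z)
      (1 * deriv (deriv (deriv F)) 0
        + (1 * deriv (deriv (deriv F)) 0 + 0 * deriv (deriv (deriv (deriv F))) 0)) 0 :=
    (HasDerivAt.const_mul 1 (aderiv (aderiv (hF 0 h0))).differentiableAt.hasDerivAt).add
      ((hasDerivAt_id 0).mul (aderiv (aderiv (aderiv (hF 0 h0)))).differentiableAt.hasDerivAt)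
  have hA : HasDerivAt (fun w => deriv φ (U w)) (deriv (deriv φ) (U 0) * deriv U 0) 0 :=
    ((aderiv (hφ (U 0) hU0')).differentiableAt.hasDerivAt).comp 0 hdU
  have hB : HasDerivAt (deriv U) (deriv (deriv U) 0) 0 :=
    (aderiv (hU 0 h0)).differentiableAt.hasDerivAt
  have hC : HasDerivAt (deriv F) (deriv (deriv F) 0) 0 :=
    (aderiv (hF 0 h0)).differentiableAt.hasDerivAt
  have hD : HasDerivAt (fun w => φ (U w) - 1) (deriv φ (U 0) * deriv U 0) 0 :=
    (((hφ (U 0) hU0').differentiableAt.hasDerivAt).comp 0 hdU).sub_const 1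
  have hE : HasDerivAt (deriv (deriv F)) (deriv (deriv (deriv F)) 0) 0 :=
    (aderiv (aderiv (hF 0 h0))).differentiableAt.hasDerivAt
  have hR : HasDerivAt (fun z => deriv φ (U z) * deriv U z * deriv F z
      + (φ (U z) - 1) * deriv (deriv F) z) _ 0 := ((hA.mul hB).mul hC).add (hD.mul hE)
  rw [hL.deriv, hR.deriv] at E3
  simp only [Pi.mul_apply] at E3
  rw [hU0, hφ0, hF1] at E3
  exact ⟨c1eq, by linear_combination E3⟩

lemma mobius_key {a ζ : ℂ} (ha : ‖a‖ < 1) (hζ : ‖ζ‖ < 1) :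
    1 - (starRingEnd ℂ) a * ζ ≠ 0 ∧ ‖a - ζ‖ < ‖1 - (starRingEnd ℂ) a * ζ‖ := by
  have hsa : normSq a < 1 := by
    rw [← Complex.sq_norm]; nlinarith [norm_nonneg a]
  have hsζ : normSq ζ < 1 := by
    rw [← Complex.sq_norm]; nlinarith [norm_nonneg ζ]
  have key : normSq (1 - (starRingEnd ℂ) a * ζ) - normSq (a - ζ)
      = (1 - normSq a) * (1 - normSq ζ) := by
    simp only [Complex.normSq_apply, Complex.sub_re, Complex.sub_im, Complex.mul_re,
      Complex.mul_im, Complex.one_re, Complex.one_im, Complex.conj_re, Complex.conj_im]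
    ring
  have hpos : 0 < (1 - normSq a) * (1 - normSq ζ) := by nlinarith
  have h1 : normSq (a - ζ) < normSq (1 - (starRingEnd ℂ) a * ζ) := by linarith
  have habs : ∀ w : ℂ, ‖w‖ ^ 2 = normSq w := fun w => Complex.sq_norm w
  have h2 : ‖a - ζ‖ ^ 2 < ‖1 - (starRingEnd ℂ) a * ζ‖ ^ 2 := by
    rw [habs, habs]; exact h1
  have h3 : ‖a - ζ‖ < ‖1 - (starRingEnd ℂ) a * ζ‖ := by
    nlinarith [norm_nonneg (a - ζ), norm_nonneg (1 - (starRingEnd ℂ) a * ζ)]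
  refine ⟨fun h => ?_, h3⟩
  · rw [h] at key; simp at key
    nlinarith [Complex.normSq_nonneg (a - ζ)]

lemma schwarz_two {U : ℂ → ℂ} (hU : AnalyticOnNhd ℂ U (ball (0:ℂ) 1))
    (hmap : ∀ z ∈ ball (0:ℂ) 1, U z ∈ ball (0:ℂ) 1) (hU0 : U 0 = 0) :
    ‖deriv U 0‖ ≤ 1 ∧ ‖deriv (deriv U) 0‖ ≤ 2 * (1 - ‖deriv U 0‖^2) := by
  have h0 : (0:ℂ) ∈ ball (0:ℂ) 1 := mem_ball_self one_pos
  set w : ℂ → ℂ := dslope U 0 with hw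
  have hmap' : Set.MapsTo U (ball (0:ℂ) 1) (ball (U 0) 1) := by
    rw [hU0]; exact fun z hz => hmap z hz
  have hwle : ∀ z ∈ ball (0:ℂ) 1, ‖w z‖ ≤ 1 := by
    intro z hz
    simpa using Complex.norm_dslope_le_div_of_mapsTo_ball hU.differentiableOn (hmap'.mono_right ball_subset_closedBall) hz
  have hw0 : w 0 = deriv U 0 := dslope_same U 0
  have hwdiff : DifferentiableOn ℂ w (ball (0:ℂ) 1) :=
    (differentiableOn_dslope (ball_mem_nhds 0 one_pos)).mpr hU.differentiableOn
  have hwan : AnalyticAt ℂ w 0 := by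
    obtain ⟨p, hp⟩ := hU 0 h0
    exact ⟨p.fslope, hp.has_fpower_series_dslope_fslope⟩
  -- second derivative of U via w
  have hUw : ∀ z : ℂ, U z = z * w z := by
    intro z
    have h := sub_smul_dslope U 0 z
    rw [hU0, sub_zero, sub_zero, smul_eq_mul] at h
    exact h.symm
  have E : deriv U =ᶠ[𝓝 (0:ℂ)] fun z => 1 * w z + z * deriv w z := by
    filter_upwards [hwan.eventually_analyticAt] with z hz
    have hd : HasDerivAt (fun y => y * w y) (1 * w z + z * deriv w z) z :=
      (hasDerivAt_id z).mul hz.differentiableAt.hasDerivAt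
    conv_lhs => rw [show U = fun y => y * w y from funext hUw]
    exact hd.deriv
  have hU2 : deriv (deriv U) 0 = 2 * deriv w 0 := by
    have h1 := Filter.EventuallyEq.deriv_eq E
    have hd : HasDerivAt (fun z => 1 * w z + z * deriv w z)
        (1 * deriv w 0 + (1 * deriv w 0 + 0 * deriv (deriv w) 0)) 0 :=
      (HasDerivAt.const_mul 1 hwan.differentiableAt.hasDerivAt).add
        ((hasDerivAt_id 0).mul (aderiv hwan).differentiableAt.hasDerivAt)
    rw [hd.deriv] at h1; rw [h1]; ring
  have hc1 : ‖deriv U 0‖ ≤ 1 := by rw [← hw0]; exact hwle 0 h0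
  -- main: ‖deriv w 0‖ ≤ 1 - ‖w 0‖^2
  have main : ‖deriv w 0‖ ≤ 1 - ‖w 0‖^2 := by
    by_cases hcase : ∃ z₀ ∈ ball (0:ℂ) 1, ‖w z₀‖ = 1
    · obtain ⟨z₀, hz₀, hn⟩ := hcase
      have hmax : IsMaxOn (norm ∘ w) (ball (0:ℂ) 1) z₀ := by
        intro z hz
        simp only [Function.comp_apply, Set.mem_setOf_eq, hn]
        exact hwle z hz
      have heq := Complex.eqOn_of_isPreconnected_of_isMaxOn_norm
        (convex_ball (0:ℂ) 1).isPreconnected isOpen_ball hwdiff hz₀ hmax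
      have hev : w =ᶠ[𝓝 (0:ℂ)] fun _ => w z₀ := by
        filter_upwards [isOpen_ball.eventually_mem h0] with z hz
        exact heq hz
      have hd0 : deriv w 0 = 0 := by
        rw [Filter.EventuallyEq.deriv_eq hev, deriv_const]
      have hn0 : ‖w 0‖ = 1 := by rw [heq h0]; exact hn
      rw [hd0, hn0]; simp
    · push_neg at hcase
      have hwlt : ∀ z ∈ ball (0:ℂ) 1, ‖w z‖ < 1 :=
        fun z hz => lt_of_le_of_ne (hwle z hz) (hcase z hz)
      set a : ℂ := w 0 with haw
      have ha : ‖a‖ < 1 := hwlt 0 h0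
      set h : ℂ → ℂ := fun z => (a - w z) / (1 - (starRingEnd ℂ) a * w z) with hh
      have hden : ∀ z ∈ ball (0:ℂ) 1, 1 - (starRingEnd ℂ) a * w z ≠ 0 :=
        fun z hz => (mobius_key ha (hwlt z hz)).1
      have hdiff : DifferentiableOn ℂ h (ball (0:ℂ) 1) :=
        ((differentiableOn_const a).sub hwdiff).div
          ((differentiableOn_const 1).sub ((differentiableOn_const _).mul hwdiff)) hden
      have hmaps : Set.MapsTo h (ball (0:ℂ) 1) (ball (h 0) 1) := by
        intro z hz
        have h0v : h 0 = 0 := by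
          simp only [hh]; rw [sub_self, zero_div]
        rw [h0v, mem_ball_zero_iff]
        have := mobius_key ha (hwlt z hz)
        calc ‖h z‖ = ‖a - w z‖ / ‖1 - (starRingEnd ℂ) a * w z‖ := norm_div _ _
        _ < 1 := (div_lt_one (lt_of_le_of_lt (norm_nonneg _) this.2)).mpr this.2
      have hsch : ‖deriv h 0‖ ≤ 1 := by
        have := Complex.norm_dslope_le_div_of_mapsTo_ball hdiff (hmaps.mono_right ball_subset_closedBall) h0
        rw [dslope_same] at this; simpa using this
      have hM : (1 - (starRingEnd ℂ) a * a) ≠ 0 := (mobius_key ha ha).1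
      have hdh : deriv h 0 = -deriv w 0 / (1 - (starRingEnd ℂ) a * a) := by
        have hnum : HasDerivAt (fun z => a - w z) (-deriv w 0) 0 :=
          (hwan.differentiableAt.hasDerivAt).const_sub a
        have hd2 : HasDerivAt (fun z => 1 - (starRingEnd ℂ) a * w z)
            (-((starRingEnd ℂ) a * deriv w 0)) 0 :=
          ((hwan.differentiableAt.hasDerivAt).const_mul ((starRingEnd ℂ) a)).const_sub 1
        have hd0 : (1 - (starRingEnd ℂ) a * w 0) ≠ 0 := hM
        have : deriv h 0 = _ := (hnum.div hd2 hd0).deriv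
        rw [this, show w 0 = a from rfl]
        field_simp
        ring
      have hMr : 1 - (starRingEnd ℂ) a * a = ((1 - normSq a : ℝ) : ℂ) := by
        push_cast
        rw [mul_comm, Complex.mul_conj]
      have hs1 : normSq a < 1 := by
        rw [← Complex.sq_norm]
        nlinarith [norm_nonneg a]
      have hnorm : ‖deriv h 0‖ = ‖deriv w 0‖ / (1 - normSq a) := by
        rw [hdh, norm_div, norm_neg, hMr, Complex.norm_real, Real.norm_eq_abs, abs_of_pos (by linarith : (0:ℝ) < 1 - normSq a)]
      rw [hnorm] at hsch
      have : ‖deriv w 0‖ ≤ 1 - normSq a := by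
        rw [div_le_one (by linarith)] at hsch; linarith
      have hna : ‖a‖^2 = normSq a := Complex.sq_norm a
      rw [hna]; exact this
  refine ⟨hc1, ?_⟩
  rw [hU2, ← hw0]
  rw [norm_mul]
  have h2n : ‖(2:ℂ)‖ = 2 := by norm_num
  rw [h2n]
  nlinarith [main]
/-- n-th Taylor coefficient of `f` at `0`. -/
noncomputable def tc (f : ℂ → ℂ) (n : ℕ) : ℂ := iteratedDeriv n f 0 / n.factorial

theorem stmt16 (f g u v φ : ℂ → ℂ) (B₁ B₂ : ℝ)
    (hf : AnalyticOn ℂ f (ball (0:ℂ) 1)) (hfinj : Set.InjOn f (ball (0:ℂ) 1))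
    (hf0 : f 0 = 0) (hf1 : deriv f 0 = 1)
    (hg : AnalyticOn ℂ g (ball (0:ℂ) 1)) (hginj : Set.InjOn g (ball (0:ℂ) 1))
    (hinv : ∀ᶠ z in 𝓝 (0:ℂ), g (f z) = z)
    (hu : AnalyticOn ℂ u (ball (0:ℂ) 1)) (humap : ∀ z ∈ ball (0:ℂ) 1, u z ∈ ball (0:ℂ) 1) (hu0 : u 0 = 0)
    (hv : AnalyticOn ℂ v (ball (0:ℂ) 1)) (hvmap : ∀ w ∈ ball (0:ℂ) 1, v w ∈ ball (0:ℂ) 1) (hv0 : v 0 = 0)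
    (hφ : AnalyticOn ℂ φ (ball (0:ℂ) 1)) (hφ0 : φ 0 = 1)
    (hB₁ : tc φ 1 = (B₁ : ℂ)) (hB₂ : tc φ 2 = (B₂ : ℂ)) (hB₁pos : 0 < B₁)
    (hfu : ∀ z ∈ ball (0:ℂ) 1, 1 + z * iteratedDeriv 2 f z / deriv f z = φ (u z))
    (hgv : ∀ w ∈ ball (0:ℂ) 1, 1 + w * iteratedDeriv 2 g w / deriv g w = φ (v w))
    (hne : B₁ ^ 2 + 2 * B₁ - 2 * B₂ ≠ 0) :
    ‖tc f 2‖ ≤ B₁ * Real.sqrt B₁ / Real.sqrt (2 * |B₁ ^ 2 + 2 * B₁ - 2 * B₂|) ∧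
    ‖tc f 3‖ ≤ (1 / 2) * (B₁ + |B₂ - B₁|) := by
  have hfN : AnalyticOnNhd ℂ f (ball (0:ℂ) 1) := (isOpen_ball.analyticOn_iff_analyticOnNhd).mp hf
  have hgN : AnalyticOnNhd ℂ g (ball (0:ℂ) 1) := (isOpen_ball.analyticOn_iff_analyticOnNhd).mp hg
  have huN : AnalyticOnNhd ℂ u (ball (0:ℂ) 1) := (isOpen_ball.analyticOn_iff_analyticOnNhd).mp hu
  have hvN : AnalyticOnNhd ℂ v (ball (0:ℂ) 1) := (isOpen_ball.analyticOn_iff_analyticOnNhd).mp hv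
  have hφN : AnalyticOnNhd ℂ φ (ball (0:ℂ) 1) := (isOpen_ball.analyticOn_iff_analyticOnNhd).mp hφ
  have i2 : ∀ h : ℂ → ℂ, iteratedDeriv 2 h = deriv (deriv h) := fun h => by
    rw [iteratedDeriv_succ, iteratedDeriv_one]
  have i3 : ∀ h : ℂ → ℂ, iteratedDeriv 3 h = deriv (deriv (deriv h)) := fun h => by
    rw [iteratedDeriv_succ, i2]
  -- φ coefficients
  have hφ1 : deriv φ 0 = (B₁ : ℂ) := by
    rw [tc] at hB₁; rw [iteratedDeriv_one] at hB₁
    simpa using hB₁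
  have hφ2 : deriv (deriv φ) 0 = 2 * (B₂ : ℂ) := by
    rw [tc, i2] at hB₂
    field_simp at hB₂
    rw [hB₂]; push_cast; ring
  -- inverse derivatives
  obtain ⟨hg1, hg2, hg3⟩ := inv_derivs hfN hgN hf0 hf1 hinv
  -- subordination coefficients
  obtain ⟨eqf1, eqf2⟩ := sub_coeffs hfN hφN huN hf1 hu0 humap hφ0 hfu
  obtain ⟨eqg1, eqg2⟩ := sub_coeffs hgN hφN hvN hg1 hv0 hvmap hφ0 hgv
  -- Schwarz estimates
  obtain ⟨su1, su2⟩ := schwarz_two huN humap hu0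
  obtain ⟨sv1, sv2⟩ := schwarz_two hvN hvmap hv0
  rw [hφ1] at eqf1 eqf2 eqg1 eqg2
  rw [hφ2] at eqf2 eqg2
  rw [hg2] at eqg1
  rw [hg3, hg2] at eqg2
  set F2 := deriv (deriv f) 0 with hF2
  set F3 := deriv (deriv (deriv f)) 0 with hF3
  set c1 := deriv u 0 with hc1
  set u2 := deriv (deriv u) 0 with hu2
  set d1 := deriv v 0 with hd1
  set v2 := deriv (deriv v) 0 with hv2
  -- eqf1 : F2 = B₁ * c1
  -- eqf2 : 2 F3 = 2 B₂ c1² + B₁ u2 + 2 (B₁ c1) F2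
  -- eqg1 : -F2 = B₁ * d1
  -- eqg2 : 2 (3F2² - F3) = 2 B₂ d1² + B₁ v2 + 2 (B₁ d1) (-F2)
  have hB₁C : (B₁ : ℂ) ≠ 0 := by exact_mod_cast hB₁pos.ne'
  have hd1c : d1 = -c1 := by
    have : (B₁ : ℂ) * d1 = (B₁ : ℂ) * (-c1) := by linear_combination -eqg1 - eqf1
    exact mul_left_cancel₀ hB₁C this
  have sumEq : 2 * F2 ^ 2 = 4 * (B₂:ℂ) * c1 ^ 2 + (B₁:ℂ) * (u2 + v2) := by
    rw [hd1c] at eqg2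
    linear_combination eqf2 + eqg2 - 4 * F2 * eqf1
  have key3 : 2 * F3 = 6 * (B₂:ℂ) * c1 ^ 2 + 2 * (B₁:ℂ) * u2 + (B₁:ℂ) * v2 := by
    linear_combination eqf2 + sumEq - 2 * F2 * eqf1
  have key2 : 2 * F2 ^ 2 * ((B₁:ℂ)^2 - 2*B₂) = (B₁:ℂ)^3 * (u2 + v2) := by
    linear_combination (B₁:ℂ)^2 * sumEq - 4 * (B₂:ℂ) * (F2 + (B₁:ℂ)*c1) * eqf1
  set T := ‖F2‖ with hT
  set S := ‖c1‖ with hS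
  have hnormB1 : ‖(B₁:ℂ)‖ = B₁ := by rw [Complex.norm_real, Real.norm_eq_abs, abs_of_pos hB₁pos]
  have hnormB2 : ‖(B₂:ℂ)‖ = |B₂| := by rw [Complex.norm_real, Real.norm_eq_abs]
  have hTS : T = B₁ * S := by
    rw [hT, hS, eqf1, norm_mul, hnormB1]
  have hS1 : S ≤ 1 := su1
  have hu2n : ‖u2‖ ≤ 2*(1 - S^2) := su2
  have hv2n : ‖v2‖ ≤ 2*(1 - S^2) := by rw [hd1c, norm_neg] at sv2; exact sv2
  have hSnn : 0 ≤ S := norm_nonneg _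
  have hTnn : 0 ≤ T := norm_nonneg _
  -- bound for a₂
  have key2' : 2 * F2 ^ 2 * ((B₁^2 - 2*B₂ : ℝ):ℂ) = ((B₁^3 : ℝ):ℂ) * (u2 + v2) := by
    push_cast; linear_combination key2
  have k2n : 2 * T^2 * |B₁^2 - 2*B₂| = B₁^3 * ‖u2 + v2‖ := by
    have h := congrArg norm key2'
    simp only [norm_mul, norm_pow, Complex.norm_real, Real.norm_eq_abs] at h
    rw [abs_of_pos hB₁pos] at h
    have h2 : ‖(2:ℂ)‖ = 2 := by norm_num
    rw [h2] at h
    exact h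
  have hT2 : T^2 = B₁^2 * S^2 := by rw [hTS]; ring
  have hF3n : ‖tc f 3‖ = ‖F3‖ / 6 := by
    rw [tc, i3, norm_div, show ‖((Nat.factorial 3 : ℕ):ℂ)‖ = 6 by norm_num [Nat.factorial]]
  have hF2n : ‖tc f 2‖ = T / 2 := by
    rw [tc, i2, norm_div, show ‖((Nat.factorial 2 : ℕ):ℂ)‖ = 2 by norm_num [Nat.factorial]]
  clear_value F2 F3 c1 u2 d1 v2 T S
  have big : T^2 * (2 * |B₁^2 - 2*B₂| + 4*B₁) ≤ 4*B₁^3 := by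
    have hsum : ‖u2 + v2‖ ≤ 4*(1 - S^2) := by
      have := norm_add_le u2 v2; linarith
    have st1 : 2 * T^2 * |B₁^2 - 2*B₂| ≤ B₁^3*(4*(1 - S^2)) := by
      rw [k2n]
      exact mul_le_mul_of_nonneg_left hsum (by positivity)
    nlinarith [st1, hT2, pow_pos hB₁pos 3]
  have hEabs : |B₁^2 + 2*B₁ - 2*B₂| ≤ |B₁^2 - 2*B₂| + 2*B₁ := by
    have := abs_add_le (B₁^2 - 2*B₂) (2*B₁)
    have h2 : |2*B₁| = 2*B₁ := abs_of_pos (by linarith)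
    calc |B₁^2 + 2*B₁ - 2*B₂| = |(B₁^2 - 2*B₂) + 2*B₁| := by ring_nf
    _ ≤ |B₁^2 - 2*B₂| + |2*B₁| := abs_add_le _ _
    _ = |B₁^2 - 2*B₂| + 2*B₁ := by rw [h2]
  have hEpos : 0 < |B₁ ^ 2 + 2 * B₁ - 2 * B₂| := abs_pos.mpr hne
  constructor
  · -- a₂ bound
    rw [hF2n]
    have h1 : (T/2)^2 ≤ B₁^3 / (2*|B₁ ^ 2 + 2 * B₁ - 2 * B₂|) := by
      rw [le_div_iff₀ (by positivity)]
      nlinarith [big, hEabs, sq_nonneg T, hEpos]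
    have h2 : T/2 ≤ Real.sqrt (B₁^3 / (2*|B₁ ^ 2 + 2 * B₁ - 2 * B₂|)) :=
      (Real.le_sqrt (by positivity) (by positivity)).mpr h1
    have h3 : Real.sqrt (B₁^3 / (2*|B₁ ^ 2 + 2 * B₁ - 2 * B₂|))
        = B₁ * Real.sqrt B₁ / Real.sqrt (2*|B₁ ^ 2 + 2 * B₁ - 2 * B₂|) := by
      rw [Real.sqrt_div (by positivity) _]
      congr 1
      rw [show B₁^3 = B₁^2 * B₁ by ring, Real.sqrt_mul (sq_nonneg B₁), Real.sqrt_sq hB₁pos.le]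
    rw [h3] at h2
    exact h2
  · -- a₃ bound
    rw [hF3n]
    have k3n : 2 * ‖F3‖ ≤ 6 * |B₂| * S^2 + 2 * B₁ * ‖u2‖ + B₁ * ‖v2‖ := by
      have hstep : ‖6 * (B₂:ℂ) * c1 ^ 2 + 2 * (B₁:ℂ) * u2 + (B₁:ℂ) * v2‖
          ≤ ‖6 * (B₂:ℂ) * c1 ^ 2‖ + ‖2 * (B₁:ℂ) * u2‖ + ‖(B₁:ℂ) * v2‖ :=
        norm_add₃_le
      have e1 : ‖6 * (B₂:ℂ) * c1 ^ 2‖ = 6 * |B₂| * S^2 := by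
        rw [norm_mul, norm_mul, norm_pow, hnormB2, ← hS, show ‖(6:ℂ)‖ = 6 by norm_num]
      have e2 : ‖2 * (B₁:ℂ) * u2‖ = 2 * B₁ * ‖u2‖ := by
        rw [norm_mul, norm_mul, hnormB1, show ‖(2:ℂ)‖ = 2 by norm_num]
      have e3 : ‖(B₁:ℂ) * v2‖ = B₁ * ‖v2‖ := by rw [norm_mul, hnormB1]
      have e0 : 2 * ‖F3‖ = ‖2 * F3‖ := by
        rw [norm_mul, show ‖(2:ℂ)‖ = 2 by norm_num]
      rw [e0, key3]
      rw [e1, e2, e3] at hstep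
      exact hstep
    have habs2 : |B₂| - B₁ ≤ |B₂ - B₁| := by
      have := abs_sub_abs_le_abs_sub B₂ B₁
      rw [abs_of_pos hB₁pos] at this
      exact this
    have p1 : S^2 * (|B₂| - B₁) ≤ S^2 * |B₂ - B₁| :=
      mul_le_mul_of_nonneg_left habs2 (sq_nonneg S)
    have hS2le : S^2 ≤ 1 := pow_le_one₀ hSnn hS1
    have p2 : S^2 * |B₂ - B₁| ≤ |B₂ - B₁| := by
      calc S^2 * |B₂ - B₁| ≤ 1 * |B₂ - B₁| :=
        mul_le_mul_of_nonneg_right hS2le (abs_nonneg _)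
      _ = |B₂ - B₁| := one_mul _
    have q1 : B₁ * ‖u2‖ ≤ B₁ * (2*(1-S^2)) := mul_le_mul_of_nonneg_left hu2n hB₁pos.le
    have q2 : B₁ * ‖v2‖ ≤ B₁ * (2*(1-S^2)) := mul_le_mul_of_nonneg_left hv2n hB₁pos.le
    linarith [k3n, q1, q2, p1, p2]
end

section
/- Let 0≤α and f∈L_σ(α,φ): f bi-univalent on 𝔻 with (zf'(z)/f(z))^α (1+zf''(z)/f'(z))^{1−α} ≺ φ(z) and the analogous subordination for g=f⁻¹, where φ(z)=1+B₁z+B₂z²+⋯, B₁>0, and 2(α²−3α+4)B₁²+4(α−2)²(B₁−B₂)≠0. Then |a₂| ≤ 2B₁√B₁ / √|2(α²−3α+4)B₁²+4(α−2)²(B₁−B₂)|. -/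
open Metric Complex Filter Topology

open Asymptotics

namespace Stmt17Aux


lemma tc_eq_coeff {h : ℂ → ℂ} {p : FormalMultilinearSeries ℂ ℂ ℂ}
    (hp : HasFPowerSeriesAt h p 0) (n : ℕ) : tc h n = p.coeff n := by
  obtain ⟨r, hr⟩ := hp
  have h1 := hr.factorial_smul (1 : ℂ) n
  have h2 : iteratedDeriv n h 0 = iteratedFDeriv ℂ n h 0 (fun _ => 1) :=
    iteratedDeriv_eq_iteratedFDeriv
  have h3 : (p n fun _ => (1:ℂ)) = p.coeff n := by
    rw [FormalMultilinearSeries.apply_eq_pow_smul_coeff]; simp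
  rw [tc, h2, ← h1, h3, nsmul_eq_mul]
  have : ((n.factorial : ℂ)) ≠ 0 := by exact_mod_cast Nat.factorial_ne_zero n
  field_simp

lemma taylor_o {h : ℂ → ℂ} (hh : AnalyticAt ℂ h 0) (n : ℕ) :
    (fun z => h z - ∑ i ∈ Finset.range (n+1), tc h i * z ^ i) =o[𝓝 (0:ℂ)]
      fun z => z ^ n := by
  obtain ⟨p, hp⟩ := hh
  have hO := hp.isBigO_sub_partialSum_pow (n+1)
  have hfun : (fun y : ℂ => h (0 + y) - p.partialSum (n+1) y)
      = fun z => h z - ∑ i ∈ Finset.range (n+1), tc h i * z ^ i := by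
    funext z
    rw [zero_add]
    congr 1
    rw [FormalMultilinearSeries.partialSum]
    refine Finset.sum_congr rfl fun i _ => ?_
    rw [FormalMultilinearSeries.apply_eq_pow_smul_coeff, ← tc_eq_coeff hp, smul_eq_mul, mul_comm]
  rw [hfun] at hO
  refine hO.trans_isLittleO ?_
  rw [isLittleO_iff]
  intro c hc
  have hev : ∀ᶠ z : ℂ in 𝓝 0, ‖z‖ < c := by
    filter_upwards [Metric.ball_mem_nhds (0:ℂ) hc] with z hz
    simpa [dist_eq_norm] using hz
  filter_upwards [hev] with z hz
  have hn : ‖(‖z‖ ^ (n+1) : ℝ)‖ = ‖z‖^(n+1) := by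
    rw [Real.norm_eq_abs]
    exact abs_of_nonneg (by positivity)
  rw [hn, norm_pow, pow_succ']
  exact mul_le_mul_of_nonneg_right hz.le (by positivity)

def E1 (l : Filter ℂ) (q : ℂ → ℂ) (a0 a1 : ℂ) : Prop :=
  (fun z => q z - (a0 + a1*z)) =o[l] fun z => z
def E2 (l : Filter ℂ) (q : ℂ → ℂ) (a0 a1 a2 : ℂ) : Prop :=
  (fun z => q z - (a0 + a1*z + a2*z^2)) =o[l] fun z => z^2
def E3 (l : Filter ℂ) (q : ℂ → ℂ) (a0 a1 a2 a3 : ℂ) : Prop :=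
  (fun z => q z - (a0 + a1*z + a2*z^2 + a3*z^3)) =o[l] fun z => z^3

lemma e1_analytic {h : ℂ → ℂ} (hh : AnalyticAt ℂ h 0) : E1 (𝓝 0) h (tc h 0) (tc h 1) := by
  have heq : (fun z : ℂ => h z - ∑ i ∈ Finset.range 2, tc h i * z ^ i)
      = fun z => h z - (tc h 0 + tc h 1 * z) := by
    funext z; rw [Finset.sum_range_succ, Finset.sum_range_one]; ring
  have := taylor_o hh 1
  rw [heq] at this
  simpa [E1] using this

lemma e2_analytic {h : ℂ → ℂ} (hh : AnalyticAt ℂ h 0) :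
    E2 (𝓝 0) h (tc h 0) (tc h 1) (tc h 2) := by
  have heq : (fun z : ℂ => h z - ∑ i ∈ Finset.range 3, tc h i * z ^ i)
      = fun z => h z - (tc h 0 + tc h 1 * z + tc h 2 * z^2) := by
    funext z; rw [Finset.sum_range_succ, Finset.sum_range_succ, Finset.sum_range_one]; ring
  have := taylor_o hh 2
  rw [heq] at this
  simpa [E2] using this

lemma e3_analytic {h : ℂ → ℂ} (hh : AnalyticAt ℂ h 0) :
    E3 (𝓝 0) h (tc h 0) (tc h 1) (tc h 2) (tc h 3) := by
  have heq : (fun z : ℂ => h z - ∑ i ∈ Finset.range 4, tc h i * z ^ i)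
      = fun z => h z - (tc h 0 + tc h 1 * z + tc h 2 * z^2 + tc h 3 * z^3) := by
    funext z
    rw [Finset.sum_range_succ, Finset.sum_range_succ, Finset.sum_range_succ,
      Finset.sum_range_one]
    ring
  have := taylor_o hh 3
  rw [heq] at this
  simpa [E3] using this

lemma E1.mono {l l' : Filter ℂ} {q a0 a1} (h : E1 l q a0 a1) (hl : l' ≤ l) : E1 l' q a0 a1 :=
  IsLittleO.mono h hl
lemma E2.mono {l l' : Filter ℂ} {q a0 a1 a2} (h : E2 l q a0 a1 a2) (hl : l' ≤ l) :
    E2 l' q a0 a1 a2 := IsLittleO.mono h hl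
lemma E3.mono {l l' : Filter ℂ} {q a0 a1 a2 a3} (h : E3 l q a0 a1 a2 a3) (hl : l' ≤ l) :
    E3 l' q a0 a1 a2 a3 := IsLittleO.mono h hl

lemma E2.congrF {l : Filter ℂ} {q q' : ℂ → ℂ} {a0 a1 a2} (h : E2 l q a0 a1 a2)
    (hq : ∀ᶠ z in l, q' z = q z) : E2 l q' a0 a1 a2 := by
  refine IsLittleO.congr' h ?_ (Filter.EventuallyEq.refl _ _)
  filter_upwards [hq] with z hz; rw [hz]

lemma E3.congrF {l : Filter ℂ} {q q' : ℂ → ℂ} {a0 a1 a2 a3} (h : E3 l q a0 a1 a2 a3)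
    (hq : ∀ᶠ z in l, q' z = q z) : E3 l q' a0 a1 a2 a3 := by
  refine IsLittleO.congr' h ?_ (Filter.EventuallyEq.refl _ _)
  filter_upwards [hq] with z hz; rw [hz]

lemma E1.coeffs {l : Filter ℂ} {q : ℂ → ℂ} {a0 a1 b0 b1 : ℂ} (h : E1 l q a0 a1)
    (h0 : a0 = b0) (h1 : a1 = b1) : E1 l q b0 b1 := by
  subst h0; subst h1; exact h

lemma E2.coeffs {l : Filter ℂ} {q : ℂ → ℂ} {a0 a1 a2 b0 b1 b2 : ℂ} (h : E2 l q a0 a1 a2)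
    (h0 : a0 = b0) (h1 : a1 = b1) (h2 : a2 = b2) : E2 l q b0 b1 b2 := by
  subst h0; subst h1; subst h2; exact h

lemma E3.coeffs {l : Filter ℂ} {q : ℂ → ℂ} {a0 a1 a2 a3 b0 b1 b2 b3 : ℂ}
    (h : E3 l q a0 a1 a2 a3) (h0 : a0 = b0) (h1 : a1 = b1) (h2 : a2 = b2) (h3 : a3 = b3) :
    E3 l q b0 b1 b2 b3 := by
  subst h0; subst h1; subst h2; subst h3; exact h

lemma tendsto_pow_zero {l : Filter ℂ} (hl : l ≤ 𝓝 0) (n : ℕ) (hn : 0 < n) :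
    Tendsto (fun z : ℂ => z ^ n) l (𝓝 0) := by
  have := ((continuous_pow n (M := ℂ)).tendsto 0).mono_left hl
  simpa [zero_pow hn.ne'] using this

lemma E1.tendsto {l : Filter ℂ} {q a0 a1} (h : E1 l q a0 a1) (hl : l ≤ 𝓝 0) :
    Tendsto q l (𝓝 a0) := by
  have h1 : Tendsto (fun z => q z - (a0 + a1*z)) l (𝓝 0) :=
    h.isBigO.trans_tendsto (by simpa using tendsto_pow_zero hl 1 one_pos)
  have h2 : Tendsto (fun z : ℂ => a0 + a1*z) l (𝓝 a0) := by
    have hc : Continuous fun z : ℂ => a0 + a1*z := by continuity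
    simpa using (hc.tendsto 0).mono_left hl
  simpa using h1.add h2

lemma E2.tendsto {l : Filter ℂ} {q a0 a1 a2} (h : E2 l q a0 a1 a2) (hl : l ≤ 𝓝 0) :
    Tendsto q l (𝓝 a0) := by
  have h1 : Tendsto (fun z => q z - (a0 + a1*z + a2*z^2)) l (𝓝 0) :=
    h.isBigO.trans_tendsto (tendsto_pow_zero hl 2 two_pos)
  have h2 : Tendsto (fun z : ℂ => a0 + a1*z + a2*z^2) l (𝓝 a0) := by
    have hc : Continuous fun z : ℂ => a0 + a1*z + a2*z^2 := by continuity
    simpa using (hc.tendsto 0).mono_left hl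
  simpa using h1.add h2

lemma E3.tendsto {l : Filter ℂ} {q a0 a1 a2 a3} (h : E3 l q a0 a1 a2 a3) (hl : l ≤ 𝓝 0) :
    Tendsto q l (𝓝 a0) := by
  have h1 : Tendsto (fun z => q z - (a0 + a1*z + a2*z^2 + a3*z^3)) l (𝓝 0) :=
    h.isBigO.trans_tendsto (tendsto_pow_zero hl 3 three_pos)
  have h2 : Tendsto (fun z : ℂ => a0 + a1*z + a2*z^2 + a3*z^3) l (𝓝 a0) := by
    have hc : Continuous fun z : ℂ => a0 + a1*z + a2*z^2 + a3*z^3 := by continuity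
    simpa using (hc.tendsto 0).mono_left hl
  simpa using h1.add h2

lemma pow_o {l : Filter ℂ} (hl : l ≤ 𝓝 0) {k m : ℕ} (hkm : k < m) :
    (fun z : ℂ => z ^ m) =o[l] fun z => z ^ k := by
  rw [isLittleO_iff]
  intro c hc
  have hev : ∀ᶠ z : ℂ in l, ‖z‖ < min c 1 := by
    apply hl
    filter_upwards [Metric.ball_mem_nhds (0:ℂ) (lt_min hc one_pos)] with z hz
    simpa [dist_eq_norm] using hz
  filter_upwards [hev] with z hz
  rw [norm_pow, norm_pow]
  calc ‖z‖^m ≤ ‖z‖^(k+1) := by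
        refine pow_le_pow_of_le_one (norm_nonneg _) ?_ hkm
        exact le_of_lt (lt_of_lt_of_le hz (min_le_right _ _))
    _ = ‖z‖ * ‖z‖^k := by rw [pow_succ']
    _ ≤ c * ‖z‖^k := by
        refine mul_le_mul_of_nonneg_right ?_ (by positivity)
        exact le_of_lt (lt_of_lt_of_le hz (min_le_left _ _))

lemma zpow_mul_o {l : Filter ℂ} (hl : l ≤ 𝓝 0) {m k : ℕ} (hkm : k < m) {Q : ℂ → ℂ}
    (hQ : ContinuousAt Q 0) : (fun z => z ^ m * Q z) =o[l] fun z => z ^ k := by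
  have hb : Q =O[l] (fun _ => (1:ℂ)) := (hQ.tendsto.mono_left hl).isBigO_one ℂ
  have := (pow_o hl hkm).mul_isBigO hb
  simpa using this

lemma o_div_z {k : ℕ} {r : ℂ → ℂ} (h : r =o[𝓝[≠](0:ℂ)] fun z => z^(k+1)) :
    (fun z => r z / z) =o[𝓝[≠](0:ℂ)] fun z => z^k := by
  rw [isLittleO_iff] at h ⊢
  intro c hc
  filter_upwards [h hc, self_mem_nhdsWithin] with z h1 h2
  have hz : z ≠ 0 := h2
  have hzpos : 0 < ‖z‖ := norm_pos_iff.2 hz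
  rw [norm_pow] at h1 ⊢
  rw [norm_div, div_le_iff₀ hzpos]
  calc ‖r z‖ ≤ c * ‖z‖^(k+1) := h1
    _ = c * ‖z‖^k * ‖z‖ := by rw [pow_succ]; ring

lemma o_const_zero {a : ℂ} (h : (fun _ : ℂ => a) =o[𝓝[≠](0:ℂ)] fun _ => (1:ℂ)) : a = 0 := by
  have h2 := (isLittleO_const_iff (c := (1:ℂ)) one_ne_zero).mp h
  exact tendsto_nhds_unique tendsto_const_nhds h2

lemma unique2' {a0 a1 a2 : ℂ}
    (h : (fun z => a0 + a1*z + a2*z^2) =o[𝓝[≠](0:ℂ)] fun z => z^2) :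
    a0 = 0 ∧ a1 = 0 ∧ a2 = 0 := by
  have hl : 𝓝[≠](0:ℂ) ≤ 𝓝 0 := nhdsWithin_le_nhds
  have t1 : Tendsto (fun z : ℂ => a0 + a1*z + a2*z^2) (𝓝[≠](0:ℂ)) (𝓝 a0) := by
    have hc : Continuous fun z : ℂ => a0 + a1*z + a2*z^2 := by continuity
    simpa using (hc.tendsto 0).mono_left hl
  have t2 : Tendsto (fun z : ℂ => a0 + a1*z + a2*z^2) (𝓝[≠](0:ℂ)) (𝓝 0) :=
    h.isBigO.trans_tendsto (tendsto_pow_zero hl 2 two_pos)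
  have ha0 : a0 = 0 := tendsto_nhds_unique t1 t2
  subst ha0
  have h1 : (fun z : ℂ => a1 + a2*z) =o[𝓝[≠](0:ℂ)] fun z => z^1 := by
    have hd := o_div_z (k := 1) h
    refine IsLittleO.congr' hd ?_ (Filter.EventuallyEq.refl _ _)
    filter_upwards [self_mem_nhdsWithin] with z hz
    have hz' : z ≠ 0 := hz
    field_simp
    ring
  have t3 : Tendsto (fun z : ℂ => a1 + a2*z) (𝓝[≠](0:ℂ)) (𝓝 a1) := by
    have hc : Continuous fun z : ℂ => a1 + a2*z := by continuity
    simpa using (hc.tendsto 0).mono_left hl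
  have t4 : Tendsto (fun z : ℂ => a1 + a2*z) (𝓝[≠](0:ℂ)) (𝓝 0) :=
    h1.isBigO.trans_tendsto (by simpa using tendsto_pow_zero hl 1 one_pos)
  have ha1 : a1 = 0 := tendsto_nhds_unique t3 t4
  subst ha1
  have h2 : (fun _ : ℂ => a2) =o[𝓝[≠](0:ℂ)] fun _ => (1:ℂ) := by
    have h1' : (fun z : ℂ => a2*z) =o[𝓝[≠](0:ℂ)] fun z => z^(0+1) := by
      refine IsLittleO.congr' h1 ?_ (by simp)
      filter_upwards with z; ring
    have hd := o_div_z h1'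
    refine IsLittleO.congr' hd ?_ (by simp)
    filter_upwards [self_mem_nhdsWithin] with z hz
    have hz' : z ≠ 0 := hz
    field_simp
  exact ⟨rfl, rfl, o_const_zero h2⟩

lemma unique3' {a0 a1 a2 a3 : ℂ}
    (h : (fun z => a0 + a1*z + a2*z^2 + a3*z^3) =o[𝓝[≠](0:ℂ)] fun z => z^3) :
    a0 = 0 ∧ a1 = 0 ∧ a2 = 0 ∧ a3 = 0 := by
  have hl : 𝓝[≠](0:ℂ) ≤ 𝓝 0 := nhdsWithin_le_nhds
  have t1 : Tendsto (fun z : ℂ => a0 + a1*z + a2*z^2 + a3*z^3) (𝓝[≠](0:ℂ)) (𝓝 a0) := by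
    have hc : Continuous fun z : ℂ => a0 + a1*z + a2*z^2 + a3*z^3 := by continuity
    simpa using (hc.tendsto 0).mono_left hl
  have t2 : Tendsto (fun z : ℂ => a0 + a1*z + a2*z^2 + a3*z^3) (𝓝[≠](0:ℂ)) (𝓝 0) :=
    h.isBigO.trans_tendsto (tendsto_pow_zero hl 3 three_pos)
  have ha0 : a0 = 0 := tendsto_nhds_unique t1 t2
  subst ha0
  have h1 : (fun z : ℂ => a1 + a2*z + a3*z^2) =o[𝓝[≠](0:ℂ)] fun z => z^2 := by
    have h' : (fun z : ℂ => (0:ℂ) + a1*z + a2*z^2 + a3*z^3) =o[𝓝[≠](0:ℂ)] fun z => z^(2+1) := by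
      refine IsLittleO.congr' h ?_ (by norm_num)
      filter_upwards with z; ring
    have hd := o_div_z h'
    refine IsLittleO.congr' hd ?_ (Filter.EventuallyEq.refl _ _)
    filter_upwards [self_mem_nhdsWithin] with z hz
    have hz' : z ≠ 0 := hz
    field_simp
    ring
  obtain ⟨hb1, hb2, hb3⟩ := unique2' h1
  exact ⟨rfl, hb1, hb2, hb3⟩





-- multiplication of second-order expansions
lemma E2.mul {l : Filter ℂ} (hl : l ≤ 𝓝 0) {p q : ℂ → ℂ} {p0 p1 p2 q0 q1 q2 : ℂ}
    (hp : E2 l p p0 p1 p2) (hq : E2 l q q0 q1 q2) :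
    E2 l (fun z => p z * q z) (p0*q0) (p0*q1 + p1*q0) (p0*q2 + p1*q1 + p2*q0) := by
  have hpb : p =O[l] (fun _ => (1:ℂ)) := (hp.tendsto hl).isBigO_one ℂ
  have hQb : (fun z : ℂ => q0 + q1*z + q2*z^2) =O[l] (fun _ => (1:ℂ)) := by
    have hc : Continuous fun z : ℂ => q0 + q1*z + q2*z^2 := by continuity
    exact ((hc.tendsto 0).mono_left hl).isBigO_one ℂ
  have t1 : (fun z => p z * (q z - (q0 + q1*z + q2*z^2))) =o[l] fun z => z^2 := by
    have := hpb.mul_isLittleO hq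
    simpa using this
  have t2 : (fun z => (p z - (p0+p1*z+p2*z^2)) * (q0+q1*z+q2*z^2)) =o[l] fun z => z^2 := by
    have := hp.mul_isBigO hQb
    simpa using this
  have t3 : (fun z : ℂ => z^3 * (p1*q2 + p2*q1 + p2*q2*z)) =o[l] fun z => z^2 := by
    refine zpow_mul_o hl (by norm_num) ?_
    exact (by continuity : Continuous fun z : ℂ => p1*q2 + p2*q1 + p2*q2*z).continuousAt
  have hsum := (t1.add t2).add t3
  have heq : (fun z => p z * q z - (p0*q0 + (p0*q1+p1*q0)*z + (p0*q2+p1*q1+p2*q0)*z^2))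
      = fun z => p z * (q z - (q0+q1*z+q2*z^2)) + (p z - (p0+p1*z+p2*z^2)) * (q0+q1*z+q2*z^2)
          + z^3 * (p1*q2 + p2*q1 + p2*q2*z) := by
    funext z; ring
  rw [E2, heq]
  exact hsum

-- composition: ψ has expansion at 0, w tends to 0 with expansion
lemma comp2 {l : Filter ℂ} (hl : l ≤ 𝓝 0) {ψ w : ℂ → ℂ} {s0 s1 s2 e1 e2 : ℂ}
    (hψ : E2 (𝓝 0) ψ s0 s1 s2) (hw : E2 l w 0 e1 e2) :
    E2 l (fun z => ψ (w z)) s0 (s1*e1) (s1*e2 + s2*e1^2) := by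
  have htw : Tendsto w l (𝓝 0) := hw.tendsto hl
  have main : (fun z => ψ (w z) - (s0 + s1*(w z) + s2*(w z)^2)) =o[l] fun z => (w z)^2 :=
    hψ.comp_tendsto htw
  have hPt : Tendsto (fun z : ℂ => (0:ℂ) + e1*z + e2*z^2) l (𝓝 0) := by
    have hc : Continuous fun z : ℂ => (0:ℂ) + e1*z + e2*z^2 := by continuity
    simpa using (hc.tendsto 0).mono_left hl
  have hwO : w =O[l] fun z => z := by
    have h1 : (fun z => w z - ((0:ℂ) + e1*z + e2*z^2)) =O[l] fun z => z :=
      hw.isBigO.trans (pow_o hl (by norm_num : 1 < 2)).isBigO |>.congr'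
        (Filter.EventuallyEq.refl _ _) (by filter_upwards with z; rw [pow_one])
    have h2 : (fun z : ℂ => (0:ℂ) + e1*z + e2*z^2) =O[l] fun z => z := by
      have heq : (fun z : ℂ => (0:ℂ) + e1*z + e2*z^2) = fun z => z * (e1 + e2*z) := by
        funext z; ring
      rw [heq]
      have hb : (fun z : ℂ => e1 + e2*z) =O[l] (fun _ => (1:ℂ)) := by
        have hc : Continuous fun z : ℂ => e1 + e2*z := by continuity
        exact ((hc.tendsto 0).mono_left hl).isBigO_one ℂ
      simpa using (isBigO_refl (fun z : ℂ => z) l).mul hb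
    simpa using h1.add h2
  have main2 : (fun z => ψ (w z) - (s0 + s1*(w z) + s2*(w z)^2)) =o[l] fun z => z^2 :=
    main.trans_isBigO (hwO.pow 2)
  have t2 : (fun z => s1 * (w z - ((0:ℂ) + e1*z + e2*z^2))) =o[l] fun z => z^2 :=
    hw.const_mul_left s1
  have hwPb : (fun z => w z + ((0:ℂ) + e1*z + e2*z^2)) =O[l] (fun _ => (1:ℂ)) := by
    have ht : Tendsto (fun z => w z + ((0:ℂ) + e1*z + e2*z^2)) l (𝓝 (0+0:ℂ)) := htw.add hPt
    exact ht.isBigO_one ℂ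
  have t3 : (fun z => s2 * ((w z - ((0:ℂ) + e1*z + e2*z^2)) * (w z + ((0:ℂ) + e1*z + e2*z^2))))
      =o[l] fun z => z^2 := by
    have := (hw.mul_isBigO hwPb).const_mul_left s2
    simpa using this
  have t4 : (fun z : ℂ => z^3 * (s2*(2*e1*e2 + e2^2*z))) =o[l] fun z => z^2 := by
    refine zpow_mul_o hl (by norm_num) ?_
    exact (by continuity : Continuous fun z : ℂ => s2*(2*e1*e2 + e2^2*z)).continuousAt
  have hsum := ((main2.add t2).add t3).add t4
  have heq : (fun z => ψ (w z) - (s0 + (s1*e1)*z + (s1*e2 + s2*e1^2)*z^2))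
      = fun z => (ψ (w z) - (s0 + s1*(w z) + s2*(w z)^2))
          + s1 * (w z - ((0:ℂ) + e1*z + e2*z^2))
          + s2 * ((w z - ((0:ℂ) + e1*z + e2*z^2)) * (w z + ((0:ℂ) + e1*z + e2*z^2)))
          + z^3 * (s2*(2*e1*e2 + e2^2*z)) := by
    funext z; ring
  rw [E2, heq]
  exact hsum

lemma comp3 {l : Filter ℂ} (hl : l ≤ 𝓝 0) {ψ w : ℂ → ℂ} {s0 s1 s2 s3 e1 e2 e3 : ℂ}
    (hψ : E3 (𝓝 0) ψ s0 s1 s2 s3) (hw : E3 l w 0 e1 e2 e3) :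
    E3 l (fun z => ψ (w z)) s0 (s1*e1) (s1*e2 + s2*e1^2)
      (s1*e3 + 2*s2*e1*e2 + s3*e1^3) := by
  have htw : Tendsto w l (𝓝 0) := hw.tendsto hl
  have main : (fun z => ψ (w z) - (s0 + s1*(w z) + s2*(w z)^2 + s3*(w z)^3))
      =o[l] fun z => (w z)^3 := hψ.comp_tendsto htw
  have hPt : Tendsto (fun z : ℂ => (0:ℂ) + e1*z + e2*z^2 + e3*z^3) l (𝓝 0) := by
    have hc : Continuous fun z : ℂ => (0:ℂ) + e1*z + e2*z^2 + e3*z^3 := by continuity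
    simpa using (hc.tendsto 0).mono_left hl
  have hwO : w =O[l] fun z => z := by
    have h1 : (fun z => w z - ((0:ℂ) + e1*z + e2*z^2 + e3*z^3)) =O[l] fun z => z :=
      hw.isBigO.trans (pow_o hl (by norm_num : 1 < 3)).isBigO |>.congr'
        (Filter.EventuallyEq.refl _ _) (by filter_upwards with z; rw [pow_one])
    have h2 : (fun z : ℂ => (0:ℂ) + e1*z + e2*z^2 + e3*z^3) =O[l] fun z => z := by
      have heq : (fun z : ℂ => (0:ℂ) + e1*z + e2*z^2 + e3*z^3)
          = fun z => z * (e1 + e2*z + e3*z^2) := by funext z; ring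
      rw [heq]
      have hb : (fun z : ℂ => e1 + e2*z + e3*z^2) =O[l] (fun _ => (1:ℂ)) := by
        have hc : Continuous fun z : ℂ => e1 + e2*z + e3*z^2 := by continuity
        exact ((hc.tendsto 0).mono_left hl).isBigO_one ℂ
      simpa using (isBigO_refl (fun z : ℂ => z) l).mul hb
    simpa using h1.add h2
  have main2 : (fun z => ψ (w z) - (s0 + s1*(w z) + s2*(w z)^2 + s3*(w z)^3))
      =o[l] fun z => z^3 := main.trans_isBigO (hwO.pow 3)
  have t2 : (fun z => s1 * (w z - ((0:ℂ) + e1*z + e2*z^2 + e3*z^3))) =o[l] fun z => z^3 :=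
    hw.const_mul_left s1
  have hwPb : (fun z => w z + ((0:ℂ) + e1*z + e2*z^2 + e3*z^3)) =O[l] (fun _ => (1:ℂ)) := by
    have ht : Tendsto (fun z => w z + ((0:ℂ) + e1*z + e2*z^2 + e3*z^3)) l (𝓝 (0+0:ℂ)) :=
      htw.add hPt
    exact ht.isBigO_one ℂ
  have t3 : (fun z => s2 * ((w z - ((0:ℂ) + e1*z + e2*z^2 + e3*z^3))
      * (w z + ((0:ℂ) + e1*z + e2*z^2 + e3*z^3)))) =o[l] fun z => z^3 := by
    have := (hw.mul_isBigO hwPb).const_mul_left s2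
    simpa using this
  have hw2b : (fun z => (w z)^2 + w z * ((0:ℂ) + e1*z + e2*z^2 + e3*z^3)
      + ((0:ℂ) + e1*z + e2*z^2 + e3*z^3)^2) =O[l] (fun _ => (1:ℂ)) := by
    have ht : Tendsto (fun z => (w z)^2 + w z * ((0:ℂ) + e1*z + e2*z^2 + e3*z^3)
        + ((0:ℂ) + e1*z + e2*z^2 + e3*z^3)^2) l (𝓝 0) := by
      have := ((htw.pow 2).add (htw.mul hPt)).add (hPt.pow 2)
      simpa using this
    exact ht.isBigO_one ℂ
  have t4 : (fun z => s3 * ((w z - ((0:ℂ) + e1*z + e2*z^2 + e3*z^3))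
      * ((w z)^2 + w z * ((0:ℂ) + e1*z + e2*z^2 + e3*z^3)
        + ((0:ℂ) + e1*z + e2*z^2 + e3*z^3)^2))) =o[l] fun z => z^3 := by
    have := (hw.mul_isBigO hw2b).const_mul_left s3
    simpa using this
  have t5 : (fun z : ℂ => z^4 * (s2*((e2^2+2*e1*e3) + 2*e2*e3*z + e3^2*z^2)
      + s3*(3*e1^2*e2 + (3*e1^2*e3+3*e1*e2^2)*z + (e2^3+6*e1*e2*e3)*z^2
        + (3*e1*e3^2+3*e2^2*e3)*z^3 + 3*e2*e3^2*z^4 + e3^3*z^5))) =o[l] fun z => z^3 := by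
    refine zpow_mul_o hl (by norm_num) ?_
    exact (by continuity : Continuous fun z : ℂ => s2*((e2^2+2*e1*e3) + 2*e2*e3*z + e3^2*z^2)
      + s3*(3*e1^2*e2 + (3*e1^2*e3+3*e1*e2^2)*z + (e2^3+6*e1*e2*e3)*z^2
        + (3*e1*e3^2+3*e2^2*e3)*z^3 + 3*e2*e3^2*z^4 + e3^3*z^5)).continuousAt
  have hsum := (((main2.add t2).add t3).add t4).add t5
  have heq : (fun z => ψ (w z) - (s0 + (s1*e1)*z + (s1*e2 + s2*e1^2)*z^2
        + (s1*e3 + 2*s2*e1*e2 + s3*e1^3)*z^3))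
      = fun z => (ψ (w z) - (s0 + s1*(w z) + s2*(w z)^2 + s3*(w z)^3))
          + s1 * (w z - ((0:ℂ) + e1*z + e2*z^2 + e3*z^3))
          + s2 * ((w z - ((0:ℂ) + e1*z + e2*z^2 + e3*z^3))
            * (w z + ((0:ℂ) + e1*z + e2*z^2 + e3*z^3)))
          + s3 * ((w z - ((0:ℂ) + e1*z + e2*z^2 + e3*z^3))
            * ((w z)^2 + w z * ((0:ℂ) + e1*z + e2*z^2 + e3*z^3)
              + ((0:ℂ) + e1*z + e2*z^2 + e3*z^3)^2))
          + z^4 * (s2*((e2^2+2*e1*e3) + 2*e2*e3*z + e3^2*z^2)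
            + s3*(3*e1^2*e2 + (3*e1^2*e3+3*e1*e2^2)*z + (e2^3+6*e1*e2*e3)*z^2
              + (3*e1*e3^2+3*e2^2*e3)*z^3 + 3*e2*e3^2*z^4 + e3^3*z^5)) := by
    funext z; ring
  rw [E3, heq]
  exact hsum





lemma tc_zero (h : ℂ → ℂ) : tc h 0 = h 0 := by
  simp [tc, iteratedDeriv_zero]

lemma tc_one (h : ℂ → ℂ) : tc h 1 = deriv h 0 := by
  simp [tc, iteratedDeriv_one]

lemma tc_deriv (h : ℂ → ℂ) (n : ℕ) : tc (deriv h) n = (n+1 : ℂ) * tc h (n+1) := by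
  rw [tc, tc, ← iteratedDeriv_succ']
  rw [Nat.factorial_succ]
  push_cast
  have h1 : ((n.factorial : ℂ)) ≠ 0 := by exact_mod_cast Nat.factorial_ne_zero n
  have h2 : ((n:ℂ) + 1) ≠ 0 := by
    exact_mod_cast Nat.cast_add_one_ne_zero (R := ℂ) n
  field_simp

-- (1+x)⁻¹ = 1 - x + x² + o(x²)
lemma psi_inv : E2 (𝓝 (0:ℂ)) (fun x => (1+x)⁻¹) 1 (-1) 1 := by
  have hev : ∀ᶠ x : ℂ in 𝓝 0, (1:ℂ) + x ≠ 0 := by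
    have hc : Continuous fun x : ℂ => (1:ℂ) + x := by continuity
    have ht : Tendsto (fun x : ℂ => (1:ℂ)+x) (𝓝 0) (𝓝 1) := by
      simpa using hc.tendsto 0
    exact ht.eventually_ne one_ne_zero
  have t : (fun x : ℂ => x^3 * (-(1+x)⁻¹)) =o[𝓝 (0:ℂ)] fun x => x^2 := by
    refine zpow_mul_o le_rfl (by norm_num) ?_
    have hca : ContinuousAt (fun x : ℂ => (1:ℂ) + x) 0 := by fun_prop
    have : ContinuousAt (fun x : ℂ => ((1:ℂ) + x)⁻¹) 0 := hca.inv₀ (by norm_num)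
    exact this.neg
  refine IsLittleO.congr' t ?_ (Filter.EventuallyEq.refl _ _)
  filter_upwards [hev] with x hx
  field_simp
  ring

-- log(1+x) = x - x²/2 + o(x²)
lemma psi_log : E2 (𝓝 (0:ℂ)) (fun x => Complex.log (1+x)) 0 1 (-(1/2)) := by
  have hone : ∀ᶠ x : ℂ in 𝓝 0, (1:ℂ) + x ∈ Complex.slitPlane := by
    have hc : Continuous fun x : ℂ => (1:ℂ) + x := by continuity
    have ht : Tendsto (fun x : ℂ => (1:ℂ)+x) (𝓝 0) (𝓝 1) := by
      simpa using hc.tendsto 0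
    exact ht.eventually (Complex.isOpen_slitPlane.eventually_mem Complex.one_mem_slitPlane)
  have hder : ∀ᶠ x : ℂ in 𝓝 0, deriv (fun x : ℂ => Complex.log (1+x)) x = (1+x)⁻¹ := by
    filter_upwards [hone] with x hx
    have hd : HasDerivAt (fun x : ℂ => Complex.log (1+x)) ((1+x)⁻¹ * 1) x :=
      (Complex.hasDerivAt_log hx).comp x ((hasDerivAt_id x).const_add 1)
    simpa using hd.deriv
  have hA : AnalyticAt ℂ (fun x : ℂ => Complex.log (1+x)) 0 := by
    have h1 : AnalyticAt ℂ (fun x : ℂ => (1:ℂ) + x) 0 := analyticAt_const.add (analyticAt_id)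
    have h2 : AnalyticAt ℂ Complex.log ((fun x : ℂ => (1:ℂ) + x) 0) := by
      simp only [add_zero]
      exact analyticAt_clog Complex.one_mem_slitPlane
    exact h2.comp h1
  have h := e2_analytic hA
  refine h.coeffs ?_ ?_ ?_
  · rw [tc_zero]; simp [Complex.log_one]
  · rw [tc_one, hder.self_of_nhds]
    norm_num
  · have h2 : iteratedDeriv 2 (fun x : ℂ => Complex.log (1+x)) 0
        = deriv (deriv (fun x : ℂ => Complex.log (1+x))) 0 := by
      rw [iteratedDeriv_succ, iteratedDeriv_one]
    have h3 : deriv (deriv (fun x : ℂ => Complex.log (1+x))) 0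
        = deriv (fun x : ℂ => (1+x)⁻¹) 0 := Filter.EventuallyEq.deriv_eq hder
    have h4 : deriv (fun x : ℂ => (1+x)⁻¹) 0 = -1 := by
      have hd : HasDerivAt (fun x : ℂ => (1:ℂ)+x) 1 0 := (hasDerivAt_id 0).const_add 1
      have := hd.inv (by norm_num)
      have h5 := this.deriv
      rw [show (fun x : ℂ => (1+x)⁻¹) = (fun x : ℂ => (1:ℂ)+x)⁻¹ from rfl, h5]
      norm_num
    rw [tc, h2, h3, h4]
    norm_num

-- exp(x) = 1 + x + x²/2 + o(x²)
lemma psi_exp : E2 (𝓝 (0:ℂ)) Complex.exp 1 1 (1/2) := by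
  have h := e2_analytic (analyticAt_cexp (z := 0))
  refine h.coeffs ?_ ?_ ?_
  · rw [tc_zero, Complex.exp_zero]
  · rw [tc_one, Complex.deriv_exp, Complex.exp_zero]
  · rw [tc]
    have h2 : iteratedDeriv 2 Complex.exp 0 = deriv (deriv Complex.exp) 0 := by
      rw [iteratedDeriv_succ, iteratedDeriv_one]
    rw [h2, Complex.deriv_exp, Complex.deriv_exp, Complex.exp_zero]
    norm_num

lemma E2.inv {l : Filter ℂ} (hl : l ≤ 𝓝 0) {q : ℂ → ℂ} {q1 q2 : ℂ} (hq : E2 l q 1 q1 q2) :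
    E2 l (fun z => (q z)⁻¹) 1 (-q1) (q1^2 - q2) := by
  have hw : E2 l (fun z => q z - 1) 0 q1 q2 := by
    have heq : (fun z => (q z - 1) - (0 + q1*z + q2*z^2)) = fun z => q z - (1 + q1*z + q2*z^2) := by
      funext z; ring
    rw [E2, heq]
    exact hq
  have h := comp2 hl psi_inv hw
  have heq : (fun z => ((1:ℂ) + (q z - 1))⁻¹) = fun z => (q z)⁻¹ := by
    funext z; norm_num
  rw [heq] at h
  exact h.coeffs rfl (by ring) (by ring)

lemma E2.log {l : Filter ℂ} (hl : l ≤ 𝓝 0) {q : ℂ → ℂ} {q1 q2 : ℂ} (hq : E2 l q 1 q1 q2) :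
    E2 l (fun z => Complex.log (q z)) 0 q1 (q2 - q1^2/2) := by
  have hw : E2 l (fun z => q z - 1) 0 q1 q2 := by
    have heq : (fun z => (q z - 1) - (0 + q1*z + q2*z^2)) = fun z => q z - (1 + q1*z + q2*z^2) := by
      funext z; ring
    rw [E2, heq]
    exact hq
  have h := comp2 hl psi_log hw
  have heq : (fun z => Complex.log ((1:ℂ) + (q z - 1))) = fun z => Complex.log (q z) := by
    funext z; norm_num
  rw [heq] at h
  exact h.coeffs rfl (by ring) (by ring)

lemma E2.cexp {l : Filter ℂ} (hl : l ≤ 𝓝 0) {S : ℂ → ℂ} {s1 s2 : ℂ} (hS : E2 l S 0 s1 s2) :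
    E2 l (fun z => Complex.exp (S z)) 1 s1 (s2 + s1^2/2) := by
  have h := comp2 hl psi_exp hS
  exact h.coeffs rfl (by ring) (by ring)

-- linear combination
lemma E2.lin {l : Filter ℂ} {p q : ℂ → ℂ} {p0 p1 p2 q0 q1 q2 : ℂ} (c d : ℂ)
    (hp : E2 l p p0 p1 p2) (hq : E2 l q q0 q1 q2) :
    E2 l (fun z => c * p z + d * q z) (c*p0 + d*q0) (c*p1 + d*q1) (c*p2 + d*q2) := by
  have h := (hp.const_mul_left c).add (hq.const_mul_left d)
  have heq : (fun z => c * p z + d * q z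
      - ((c*p0 + d*q0) + (c*p1 + d*q1)*z + (c*p2 + d*q2)*z^2))
      = fun z => c * (p z - (p0 + p1*z + p2*z^2)) + d * (q z - (q0 + q1*z + q2*z^2)) := by
    funext z; ring
  rw [E2, heq]
  exact h

-- multiply expansion by z : E1 -> E2
lemma E1.mul_z {l : Filter ℂ} {q : ℂ → ℂ} {a0 a1 : ℂ} (h : E1 l q a0 a1) :
    E2 l (fun z => z * q z) 0 a0 a1 := by
  have h1 := (isBigO_refl (fun z : ℂ => z) l).mul_isLittleO h
  have heq : (fun z => z * q z - (0 + a0*z + a1*z^2)) = fun z => z * (q z - (a0 + a1*z)) := by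
    funext z; ring
  have heq2 : (fun z : ℂ => z * z) = fun z : ℂ => z^2 := by funext z; ring
  rw [E2, heq]
  rw [heq2] at h1
  exact h1

-- divide by z : E3 with zero constant term -> E2
lemma E3.div_z {q : ℂ → ℂ} {k1 k2 k3 : ℂ} (h : E3 (𝓝[≠](0:ℂ)) q 0 k1 k2 k3) :
    E2 (𝓝[≠](0:ℂ)) (fun z => q z / z) k1 k2 k3 := by
  have h' : (fun z => q z - (0 + k1*z + k2*z^2 + k3*z^3)) =o[𝓝[≠](0:ℂ)] fun z => z^(2+1) := h
  have hd := o_div_z h'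
  refine IsLittleO.congr' hd ?_ (Filter.EventuallyEq.refl _ _)
  filter_upwards [self_mem_nhdsWithin] with z hz
  have hz' : z ≠ 0 := hz
  field_simp
  ring





lemma E2.unique {q : ℂ → ℂ} {a0 a1 a2 b0 b1 b2 : ℂ}
    (h1 : E2 (𝓝[≠](0:ℂ)) q a0 a1 a2) (h2 : E2 (𝓝[≠](0:ℂ)) q b0 b1 b2) :
    a0 = b0 ∧ a1 = b1 ∧ a2 = b2 := by
  have hs := IsLittleO.sub h1 h2
  have heq : (fun z => (q z - (a0 + a1*z + a2*z^2)) - (q z - (b0 + b1*z + b2*z^2)))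
      = fun z => (b0-a0) + (b1-a1)*z + (b2-a2)*z^2 := by funext z; ring
  rw [heq] at hs
  obtain ⟨e0, e1, e2⟩ := unique2' hs
  refine ⟨by linear_combination -e0, by linear_combination -e1, by linear_combination -e2⟩

lemma E3.unique {q : ℂ → ℂ} {a0 a1 a2 a3 b0 b1 b2 b3 : ℂ}
    (h1 : E3 (𝓝[≠](0:ℂ)) q a0 a1 a2 a3) (h2 : E3 (𝓝[≠](0:ℂ)) q b0 b1 b2 b3) :
    a0 = b0 ∧ a1 = b1 ∧ a2 = b2 ∧ a3 = b3 := by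
  have hs := IsLittleO.sub h1 h2
  have heq : (fun z => (q z - (a0 + a1*z + a2*z^2 + a3*z^3))
        - (q z - (b0 + b1*z + b2*z^2 + b3*z^3)))
      = fun z => (b0-a0) + (b1-a1)*z + (b2-a2)*z^2 + (b3-a3)*z^3 := by funext z; ring
  rw [heq] at hs
  obtain ⟨e0, e1, e2, e3⟩ := unique3' hs
  exact ⟨by linear_combination -e0, by linear_combination -e1,
    by linear_combination -e2, by linear_combination -e3⟩

lemma subord_coeffs {f u φ : ℂ → ℂ} {α : ℝ}
    (hfA : AnalyticOnNhd ℂ f (ball (0:ℂ) 1)) (hf0 : f 0 = 0) (hf1 : deriv f 0 = 1)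
    (huA : AnalyticAt ℂ u 0) (hu0 : u 0 = 0)
    (hφA : AnalyticAt ℂ φ 0) (hφ0 : φ 0 = 1)
    (hEq : ∀ᶠ z in 𝓝[≠](0:ℂ),
      (z * deriv f z / f z) ^ (α:ℂ) * (1 + z * iteratedDeriv 2 f z / deriv f z) ^ (1-(α:ℂ))
        = φ (u z)) :
    ((α:ℂ) * tc f 2 + (1-(α:ℂ))*(2*tc f 2) = tc φ 1 * tc u 1) ∧
    ((α:ℂ)*(2*tc f 3 - 3*(tc f 2)^2/2) + (1-(α:ℂ))*(6*tc f 3 - 6*(tc f 2)^2)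
      + ((α:ℂ) * tc f 2 + (1-(α:ℂ))*(2*tc f 2))^2/2
      = tc φ 1 * tc u 2 + tc φ 2 * (tc u 1)^2) := by
  have hl : 𝓝[≠](0:ℂ) ≤ 𝓝 0 := nhdsWithin_le_nhds
  have h0mem : (0:ℂ) ∈ ball (0:ℂ) 1 := by simp
  have hf0A : AnalyticAt ℂ f 0 := hfA 0 h0mem
  have hdfA : AnalyticOnNhd ℂ (deriv f) (ball (0:ℂ) 1) := hfA.deriv
  have hdf0A : AnalyticAt ℂ (deriv f) 0 := hdfA 0 h0mem
  have hd2A : AnalyticAt ℂ (deriv (deriv f)) 0 := hdfA.deriv 0 h0mem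
  -- basic expansions
  have hf3 : E3 (𝓝[≠](0:ℂ)) f 0 1 (tc f 2) (tc f 3) := by
    refine ((e3_analytic hf0A).coeffs ?_ ?_ rfl rfl).mono hl
    · rw [tc_zero, hf0]
    · rw [tc_one, hf1]
  have hfz : E2 (𝓝[≠](0:ℂ)) (fun z => f z / z) 1 (tc f 2) (tc f 3) := hf3.div_z
  have hdf2 : E2 (𝓝[≠](0:ℂ)) (deriv f) 1 (2*tc f 2) (3*tc f 3) := by
    refine ((e2_analytic hdf0A).coeffs ?_ ?_ ?_).mono hl
    · rw [tc_deriv, tc_one, hf1]; push_cast; ring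
    · rw [tc_deriv]; push_cast; ring
    · rw [tc_deriv]; push_cast; ring
  have hd2e : E1 (𝓝[≠](0:ℂ)) (deriv (deriv f)) (2*tc f 2) (6*tc f 3) := by
    refine ((e1_analytic hd2A).coeffs ?_ ?_).mono hl
    · rw [tc_deriv, tc_deriv]; push_cast; ring
    · rw [tc_deriv, tc_deriv]; push_cast; ring
  -- A z = z f'/f
  have hA : E2 (𝓝[≠](0:ℂ)) (fun z => z * deriv f z / f z) 1 (tc f 2)
      (2*tc f 3 - (tc f 2)^2) := by
    have hinv := E2.inv hl hfz
    have hmul := E2.mul hl hdf2 hinv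
    refine (hmul.coeffs (by ring) (by ring) (by ring)).congrF ?_
    filter_upwards [self_mem_nhdsWithin] with z hz
    have hz' : z ≠ 0 := hz
    rw [inv_div]
    field_simp
  -- H z = 1 + z f''/f'
  have hH : E2 (𝓝[≠](0:ℂ)) (fun z => 1 + z * iteratedDeriv 2 f z / deriv f z) 1
      (2*tc f 2) (6*tc f 3 - 4*(tc f 2)^2) := by
    have hz2 : E2 (𝓝[≠](0:ℂ)) (fun z => z * deriv (deriv f) z) 0 (2*tc f 2) (6*tc f 3) :=
      hd2e.mul_z
    have hidf := E2.inv hl hdf2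
    have hmul := E2.mul hl hz2 hidf
    have hmul' : E2 (𝓝[≠](0:ℂ)) (fun z => z * deriv (deriv f) z * (deriv f z)⁻¹) 0
        (2*tc f 2) (6*tc f 3 - 4*(tc f 2)^2) := hmul.coeffs (by ring) (by ring) (by ring)
    have hc : E2 (𝓝[≠](0:ℂ)) (fun _ : ℂ => (1:ℂ)) 1 0 0 := by
      rw [E2]
      have : (fun z : ℂ => (1:ℂ) - (1 + 0*z + 0*z^2)) = fun _ => (0:ℂ) := by funext z; ring
      rw [this]
      exact isLittleO_zero _ _
    have hone := E2.lin 1 1 hc hmul'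
    have hifd2 : iteratedDeriv 2 f = deriv (deriv f) := by
      rw [iteratedDeriv_succ, iteratedDeriv_one]
    refine (hone.coeffs (by ring) (by ring) (by ring)).congrF ?_
    filter_upwards with z
    rw [hifd2]
    ring
  -- logs and exp
  have hlogA := E2.log hl hA
  have hlogH := E2.log hl hH
  have hS := E2.lin (α:ℂ) (1-(α:ℂ)) hlogA hlogH
  have hS' : E2 (𝓝[≠](0:ℂ)) (fun z => (α:ℂ) * Complex.log (z * deriv f z / f z)
      + (1-(α:ℂ)) * Complex.log (1 + z * iteratedDeriv 2 f z / deriv f z)) 0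
      ((α:ℂ) * tc f 2 + (1-(α:ℂ))*(2*tc f 2))
      ((α:ℂ)*(2*tc f 3 - 3*(tc f 2)^2/2) + (1-(α:ℂ))*(6*tc f 3 - 6*(tc f 2)^2)) :=
    hS.coeffs (by ring) (by ring) (by ring)
  have hexp := E2.cexp hl hS'
  -- LHS equals exp of S eventually
  have hAne : ∀ᶠ z in 𝓝[≠](0:ℂ), z * deriv f z / f z ≠ 0 :=
    (hA.tendsto hl).eventually_ne one_ne_zero
  have hHne : ∀ᶠ z in 𝓝[≠](0:ℂ), 1 + z * iteratedDeriv 2 f z / deriv f z ≠ 0 :=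
    (hH.tendsto hl).eventually_ne one_ne_zero
  have hLHS : E2 (𝓝[≠](0:ℂ))
      (fun z => (z * deriv f z / f z) ^ (α:ℂ)
        * (1 + z * iteratedDeriv 2 f z / deriv f z) ^ (1-(α:ℂ))) 1
      ((α:ℂ) * tc f 2 + (1-(α:ℂ))*(2*tc f 2))
      ((α:ℂ)*(2*tc f 3 - 3*(tc f 2)^2/2) + (1-(α:ℂ))*(6*tc f 3 - 6*(tc f 2)^2)
        + ((α:ℂ) * tc f 2 + (1-(α:ℂ))*(2*tc f 2))^2/2) := by
    refine (hexp.congrF ?_)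
    filter_upwards [hAne, hHne] with z h1 h2
    rw [Complex.cpow_def_of_ne_zero h1, Complex.cpow_def_of_ne_zero h2, ← Complex.exp_add]
    congr 1
    ring
  -- RHS expansion
  have huE : E2 (𝓝[≠](0:ℂ)) u 0 (tc u 1) (tc u 2) := by
    refine ((e2_analytic huA).coeffs ?_ rfl rfl).mono hl
    rw [tc_zero, hu0]
  have hφE : E2 (𝓝 0) φ 1 (tc φ 1) (tc φ 2) := by
    refine (e2_analytic hφA).coeffs ?_ rfl rfl
    rw [tc_zero, hφ0]
  have hRHS : E2 (𝓝[≠](0:ℂ)) (fun z => φ (u z)) 1 (tc φ 1 * tc u 1)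
      (tc φ 1 * tc u 2 + tc φ 2 * (tc u 1)^2) := comp2 hl hφE huE
  -- transfer and match
  have hLHS' : E2 (𝓝[≠](0:ℂ)) (fun z => φ (u z)) 1
      ((α:ℂ) * tc f 2 + (1-(α:ℂ))*(2*tc f 2))
      ((α:ℂ)*(2*tc f 3 - 3*(tc f 2)^2/2) + (1-(α:ℂ))*(6*tc f 3 - 6*(tc f 2)^2)
        + ((α:ℂ) * tc f 2 + (1-(α:ℂ))*(2*tc f 2))^2/2) := by
    refine hLHS.congrF ?_
    filter_upwards [hEq] with z hz
    rw [hz]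
  obtain ⟨-, h1, h2⟩ := hLHS'.unique hRHS
  exact ⟨h1, h2⟩

lemma inverse_coeffs {f g : ℂ → ℂ} (hfA : AnalyticAt ℂ f 0) (hf0 : f 0 = 0)
    (hf1 : deriv f 0 = 1) (hgA : AnalyticAt ℂ g 0)
    (hinv : ∀ᶠ z in 𝓝 (0:ℂ), g (f z) = z) :
    g 0 = 0 ∧ deriv g 0 = 1 ∧ tc g 2 = - tc f 2 ∧ tc g 3 = 2*(tc f 2)^2 - tc f 3 := by
  have hl : 𝓝[≠](0:ℂ) ≤ 𝓝 0 := nhdsWithin_le_nhds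
  have hg0 : g 0 = 0 := by
    have h := hinv.self_of_nhds
    rwa [hf0] at h
  have hf3 : E3 (𝓝 0) f 0 1 (tc f 2) (tc f 3) := by
    refine (e3_analytic hfA).coeffs ?_ ?_ rfl rfl
    · rw [tc_zero, hf0]
    · rw [tc_one, hf1]
  have hg3 : E3 (𝓝 0) g 0 (tc g 1) (tc g 2) (tc g 3) := by
    refine (e3_analytic hgA).coeffs ?_ rfl rfl rfl
    rw [tc_zero, hg0]
  have hcomp := comp3 le_rfl hg3 hf3
  have hid : E3 (𝓝 0) (fun z => g (f z)) 0 1 0 0 := by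
    have hid0 : E3 (𝓝 0) (fun z : ℂ => z) 0 1 0 0 := by
      rw [E3]
      have : (fun z : ℂ => z - (0 + 1*z + 0*z^2 + 0*z^3)) = fun _ => (0:ℂ) := by
        funext z; ring
      rw [this]
      exact isLittleO_zero _ _
    refine hid0.congrF ?_
    filter_upwards [hinv] with z hz
    exact hz
  obtain ⟨-, e1, e2, e3⟩ := (hcomp.mono hl).unique (hid.mono hl)
  have hb1 : tc g 1 = 1 := by linear_combination e1
  have hg1 : deriv g 0 = 1 := by rw [← tc_one]; exact hb1
  have hb2 : tc g 2 = - tc f 2 := by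
    rw [hb1] at e2; linear_combination e2
  have hb3 : tc g 3 = 2*(tc f 2)^2 - tc f 3 := by
    rw [hb1, hb2] at e3; linear_combination e3
  exact ⟨hg0, hg1, hb2, hb3⟩




lemma schwarz_pick_zero {w : ℂ → ℂ} (hd : DifferentiableOn ℂ w (ball (0:ℂ) 1))
    (hb : ∀ z ∈ ball (0:ℂ) 1, ‖w z‖ ≤ 1) : ‖deriv w 0‖ ≤ 1 - ‖w 0‖^2 := by
  have h0 : (0:ℂ) ∈ ball (0:ℂ) 1 := by simp
  have haue : ‖w 0‖ ≤ 1 := hb 0 h0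
  rcases eq_or_lt_of_le haue with heq1 | hlt
  · -- ‖w 0‖ = 1 : maximum modulus => constant
    have hmax : IsMaxOn (norm ∘ w) (ball (0:ℂ) 1) 0 := by
      intro z hz
      simp only [Function.comp_apply, Set.mem_setOf_eq]
      rw [heq1]
      exact hb z hz
    have hconst := Complex.eqOn_of_isPreconnected_of_isMaxOn_norm
      (convex_ball (0:ℂ) 1).isPreconnected isOpen_ball hd h0 hmax
    have hev : w =ᶠ[𝓝 (0:ℂ)] fun _ => w 0 := by
      filter_upwards [isOpen_ball.mem_nhds h0] with z hz
      exact hconst hz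
    have hder : deriv w 0 = 0 := by
      rw [Filter.EventuallyEq.deriv_eq hev, deriv_const]
    have hsq : ‖w 0‖^2 = 1 := by rw [heq1]; norm_num
    rw [hder, norm_zero, hsq]
    norm_num
  · -- ‖w 0‖ < 1 : Möbius transform
    set a := w 0 with ha
    set c := (starRingEnd ℂ) a with hc
    have hca : ‖c‖ = ‖a‖ := RCLike.norm_conj a
    have hden : ∀ z ∈ ball (0:ℂ) 1, (1:ℂ) - c * w z ≠ 0 := by
      intro z hz hcontra
      have h1 : ‖c * w z‖ ≤ ‖a‖ := by
        rw [norm_mul, hca]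
        calc ‖a‖ * ‖w z‖ ≤ ‖a‖ * 1 :=
              mul_le_mul_of_nonneg_left (hb z hz) (norm_nonneg _)
          _ = ‖a‖ := mul_one _
      have h2 : c * w z = 1 := by linear_combination -hcontra
      rw [h2] at h1
      simp only [norm_one] at h1
      exact absurd (lt_of_le_of_lt h1 hlt) (lt_irrefl _)
    set τ := fun z => (w z - a) / (1 - c * w z) with hτ
    have hτd : DifferentiableOn ℂ τ (ball (0:ℂ) 1) := by
      refine DifferentiableOn.div (hd.sub_const a) ?_ hden
      exact (differentiableOn_const 1).sub ((differentiableOn_const c).mul hd)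
    have hτ0 : τ 0 = 0 := by
      simp only [hτ]
      rw [← ha, sub_self, zero_div]
    -- key bound ‖τ z‖ ≤ 1
    have hτb : ∀ z ∈ ball (0:ℂ) 1, ‖τ z‖ ≤ 1 := by
      intro z hz
      have hxle : ‖w z‖ ≤ 1 := hb z hz
      set x := w z with hx
      have hre : (a * (starRingEnd ℂ) x).re = (x * (starRingEnd ℂ) a).re := by
        have hconj : x * (starRingEnd ℂ) a = (starRingEnd ℂ) (a * (starRingEnd ℂ) x) := by
          rw [map_mul, Complex.conj_conj]
          ring
        rw [hconj, Complex.conj_re]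
      have e1 : Complex.normSq (x - a)
          = Complex.normSq x + Complex.normSq a - 2 * (x * (starRingEnd ℂ) a).re :=
        Complex.normSq_sub x a
      have e2 : Complex.normSq (1 - c * x)
          = 1 + Complex.normSq a * Complex.normSq x - 2 * (x * (starRingEnd ℂ) a).re := by
        have h2 := Complex.normSq_sub 1 (c * x)
        rw [Complex.normSq_one, one_mul] at h2
        have h3 : Complex.normSq (c * x) = Complex.normSq a * Complex.normSq x := by
          rw [map_mul, hc, Complex.normSq_conj]
        have h4 : ((starRingEnd ℂ) (c * x)).re = (x * (starRingEnd ℂ) a).re := by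
          rw [map_mul, hc, Complex.conj_conj, hre]
        rw [h2, h3, h4]
      have hx2 : Complex.normSq x ≤ 1 := by
        rw [← Complex.sq_norm]
        nlinarith [norm_nonneg x]
      have ha2 : Complex.normSq a < 1 := by
        rw [← Complex.sq_norm]
        nlinarith [norm_nonneg a]
      have key : Complex.normSq (x - a) ≤ Complex.normSq (1 - c * x) := by
        rw [e1, e2]
        nlinarith
      have keyn : ‖x - a‖ ≤ ‖(1:ℂ) - c * x‖ := by
        rw [Complex.norm_def, Complex.norm_def]
        exact Real.sqrt_le_sqrt key
      simp only [hτ]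
      rw [norm_div]
      exact div_le_one_of_le₀ keyn (norm_nonneg _)
    -- Schwarz lemma gives ‖deriv τ 0‖ ≤ 1
    have hτd1 : ‖deriv τ 0‖ ≤ 1 := by
      refine le_of_forall_pos_le_add fun ε hε => ?_
      have hmaps : Set.MapsTo τ (ball (0:ℂ) 1) (ball (τ 0) (1+ε)) := by
        intro z hz
        have hdist : dist (τ z) (τ 0) < 1 + ε := by
          rw [hτ0, dist_zero_right]
          exact lt_of_le_of_lt (hτb z hz) (by linarith)
        exact mem_ball.mpr hdist
      have hdd := Complex.norm_deriv_le_div_of_mapsTo_ball hτd (hmaps.mono_right ball_subset_closedBall) one_pos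
      calc ‖deriv τ 0‖ ≤ (1+ε)/1 := hdd
        _ = 1 + ε := by norm_num
    -- compute deriv τ 0
    have hw0d : DifferentiableAt ℂ w 0 := hd.differentiableAt (isOpen_ball.mem_nhds h0)
    have hden0 : (1:ℂ) - c * a ≠ 0 := by
      have := hden 0 h0
      rwa [← ha] at this
    have hnum : HasDerivAt (fun z => w z - a) (deriv w 0) 0 :=
      hw0d.hasDerivAt.sub_const a
    have hdenD : HasDerivAt (fun z => (1:ℂ) - c * w z) (-(c * deriv w 0)) 0 :=
      (hw0d.hasDerivAt.const_mul c).const_sub 1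
    have hden0' : (1:ℂ) - c * w 0 ≠ 0 := by rw [← ha]; exact hden0
    have hτder := (hnum.div hdenD hden0').deriv
    -- hτder : deriv τ 0 = ...
    have hval : deriv τ 0 = deriv w 0 / (1 - c * a) := by
      rw [show τ = (fun z => w z - a) / (fun z => 1 - c * w z) from rfl, hτder, ← ha]
      field_simp
      ring
    have hreal : (1:ℂ) - c * a = ((1 - ‖a‖^2 : ℝ) : ℂ) := by
      have h1 : c * a = (Complex.normSq a : ℂ) := by
        rw [hc, mul_comm, Complex.mul_conj]
      rw [h1, ← Complex.sq_norm]
      push_cast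
      ring
    have hpos : 0 < 1 - ‖a‖^2 := by nlinarith [norm_nonneg a]
    have hnorm : ‖deriv τ 0‖ = ‖deriv w 0‖ / (1 - ‖a‖^2) := by
      rw [hval, norm_div, hreal, Complex.norm_real, Real.norm_eq_abs, abs_of_pos hpos]
    rw [hnorm] at hτd1
    calc ‖deriv w 0‖ = ‖deriv w 0‖ / (1 - ‖a‖^2) * (1 - ‖a‖^2) :=
          (div_mul_cancel₀ _ hpos.ne').symm
      _ ≤ 1 * (1 - ‖a‖^2) := mul_le_mul_of_nonneg_right hτd1 (le_of_lt hpos)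
      _ = 1 - ‖a‖^2 := one_mul _

lemma analyticAt_dslope_ball {u : ℂ → ℂ} (huA : AnalyticOnNhd ℂ u (ball (0:ℂ) 1))
    {z : ℂ} (hz : z ∈ ball (0:ℂ) 1) : AnalyticAt ℂ (dslope u 0) z := by
  rcases eq_or_ne z 0 with rfl | hz0
  · obtain ⟨p, hp⟩ := huA 0 (by simp)
    exact hp.has_fpower_series_dslope_fslope.analyticAt
  · have hA : AnalyticAt ℂ (fun y => (u y - u 0) / (y - 0)) z := by
      refine AnalyticAt.div ?_ ?_ (by simpa using hz0)
      · exact (huA z hz).sub analyticAt_const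
      · exact analyticAt_id.sub analyticAt_const
    refine hA.congr ?_
    have hne : ∀ᶠ y in 𝓝 z, y ≠ 0 := eventually_ne_nhds hz0
    filter_upwards [hne] with y hy
    rw [dslope_of_ne u hy, slope_def_field]

lemma schwarz_coeff2 {u : ℂ → ℂ} (huA : AnalyticOnNhd ℂ u (ball (0:ℂ) 1))
    (humap : ∀ z ∈ ball (0:ℂ) 1, u z ∈ ball (0:ℂ) 1) (hu0 : u 0 = 0) :
    ‖tc u 2 + (tc u 1)^2‖ ≤ 1 := by
  have h0 : (0:ℂ) ∈ ball (0:ℂ) 1 := by simp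
  set w := dslope u 0 with hw
  have hwd : DifferentiableOn ℂ w (ball (0:ℂ) 1) := fun z hz =>
    (analyticAt_dslope_ball huA hz).differentiableAt.differentiableWithinAt
  have hud : DifferentiableOn ℂ u (ball (0:ℂ) 1) := huA.differentiableOn
  have humaps : Set.MapsTo u (ball (0:ℂ) 1) (ball (u 0) 1) := by
    intro z hz
    rw [hu0]
    exact humap z hz
  have hwb : ∀ z ∈ ball (0:ℂ) 1, ‖w z‖ ≤ 1 := by
    intro z hz
    have := Complex.norm_dslope_le_div_of_mapsTo_ball hud (humaps.mono_right ball_subset_closedBall) hz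
    simpa using this
  have key := schwarz_pick_zero hwd hwb
  have hw0 : w 0 = tc u 1 := by
    rw [hw, dslope_same, tc_one]
  have hw1 : deriv w 0 = tc u 2 := by
    obtain ⟨p, hp⟩ := huA 0 h0
    have hps := hp.has_fpower_series_dslope_fslope
    have hder : deriv (dslope u 0) 0 = p.fslope.coeff 1 := hps.deriv
    rw [hw, hder, FormalMultilinearSeries.coeff_fslope, ← tc_eq_coeff hp]
  rw [hw0, hw1] at key
  calc ‖tc u 2 + (tc u 1)^2‖ ≤ ‖tc u 2‖ + ‖(tc u 1)^2‖ := norm_add_le _ _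
    _ = ‖tc u 2‖ + ‖tc u 1‖^2 := by rw [norm_pow]
    _ ≤ (1 - ‖tc u 1‖^2) + ‖tc u 1‖^2 := by linarith
    _ = 1 := by ring


end Stmt17Aux

open Stmt17Aux in
theorem stmt17 (f g u v φ : ℂ → ℂ) (α B₁ B₂ : ℝ) (hα : 0 ≤ α)
    (hf : AnalyticOn ℂ f (ball (0:ℂ) 1)) (hfinj : Set.InjOn f (ball (0:ℂ) 1))
    (hf0 : f 0 = 0) (hf1 : deriv f 0 = 1)
    (hg : AnalyticOn ℂ g (ball (0:ℂ) 1)) (hginj : Set.InjOn g (ball (0:ℂ) 1))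
    (hinv : ∀ᶠ z in 𝓝 (0:ℂ), g (f z) = z)
    (hu : AnalyticOn ℂ u (ball (0:ℂ) 1)) (humap : ∀ z ∈ ball (0:ℂ) 1, u z ∈ ball (0:ℂ) 1) (hu0 : u 0 = 0)
    (hv : AnalyticOn ℂ v (ball (0:ℂ) 1)) (hvmap : ∀ w ∈ ball (0:ℂ) 1, v w ∈ ball (0:ℂ) 1) (hv0 : v 0 = 0)
    (hφ : AnalyticOn ℂ φ (ball (0:ℂ) 1)) (hφ0 : φ 0 = 1)
    (hB₁ : tc φ 1 = (B₁ : ℂ)) (hB₂ : tc φ 2 = (B₂ : ℂ)) (hB₁pos : 0 < B₁)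
    (hfu : ∀ z ∈ ball (0:ℂ) 1, z ≠ 0 →
      (z * deriv f z / f z) ^ (α : ℂ)
        * (1 + z * iteratedDeriv 2 f z / deriv f z) ^ (1 - (α : ℂ)) = φ (u z))
    (hgv : ∀ w ∈ ball (0:ℂ) 1, w ≠ 0 →
      (w * deriv g w / g w) ^ (α : ℂ)
        * (1 + w * iteratedDeriv 2 g w / deriv g w) ^ (1 - (α : ℂ)) = φ (v w))
    (hne : 2 * (α ^ 2 - 3 * α + 4) * B₁ ^ 2 + 4 * (α - 2) ^ 2 * (B₁ - B₂) ≠ 0) :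
    ‖tc f 2‖ ≤ 2 * B₁ * Real.sqrt B₁ /
      Real.sqrt |2 * (α ^ 2 - 3 * α + 4) * B₁ ^ 2 + 4 * (α - 2) ^ 2 * (B₁ - B₂)| := by
  have h0mem : (0:ℂ) ∈ ball (0:ℂ) 1 := by simp
  have hfN : AnalyticOnNhd ℂ f (ball (0:ℂ) 1) :=
    (isOpen_ball.analyticOn_iff_analyticOnNhd).mp hf
  have hgN : AnalyticOnNhd ℂ g (ball (0:ℂ) 1) :=
    (isOpen_ball.analyticOn_iff_analyticOnNhd).mp hg
  have huN : AnalyticOnNhd ℂ u (ball (0:ℂ) 1) :=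
    (isOpen_ball.analyticOn_iff_analyticOnNhd).mp hu
  have hvN : AnalyticOnNhd ℂ v (ball (0:ℂ) 1) :=
    (isOpen_ball.analyticOn_iff_analyticOnNhd).mp hv
  have hφN : AnalyticOnNhd ℂ φ (ball (0:ℂ) 1) :=
    (isOpen_ball.analyticOn_iff_analyticOnNhd).mp hφ
  have hball : ∀ᶠ z in 𝓝[≠](0:ℂ), z ∈ ball (0:ℂ) 1 :=
    (isOpen_ball.eventually_mem h0mem).filter_mono nhdsWithin_le_nhds
  have hEqf : ∀ᶠ z in 𝓝[≠](0:ℂ),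
      (z * deriv f z / f z) ^ (α:ℂ) * (1 + z * iteratedDeriv 2 f z / deriv f z) ^ (1-(α:ℂ))
        = φ (u z) := by
    filter_upwards [hball, self_mem_nhdsWithin] with z hz hz0
    exact hfu z hz hz0
  have hEqg : ∀ᶠ z in 𝓝[≠](0:ℂ),
      (z * deriv g z / g z) ^ (α:ℂ) * (1 + z * iteratedDeriv 2 g z / deriv g z) ^ (1-(α:ℂ))
        = φ (v z) := by
    filter_upwards [hball, self_mem_nhdsWithin] with z hz hz0
    exact hgv z hz hz0
  obtain ⟨Ef1, Ef2⟩ := subord_coeffs hfN hf0 hf1 (huN 0 h0mem) hu0 (hφN 0 h0mem) hφ0 hEqf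
  obtain ⟨hg0, hg1, hb2, hb3⟩ := inverse_coeffs (hfN 0 h0mem) hf0 hf1 (hgN 0 h0mem) hinv
  obtain ⟨Eg1, Eg2⟩ := subord_coeffs hgN hg0 hg1 (hvN 0 h0mem) hv0 (hφN 0 h0mem) hφ0 hEqg
  rw [hB₁] at Ef1 Eg1
  rw [hB₁, hB₂] at Ef2 Eg2
  rw [hb2] at Eg1
  rw [hb2, hb3] at Eg2
  have Su := schwarz_coeff2 huN humap hu0
  have Sv := schwarz_coeff2 hvN hvmap hv0
  set D : ℝ := 2 * (α ^ 2 - 3 * α + 4) * B₁ ^ 2 + 4 * (α - 2) ^ 2 * (B₁ - B₂) with hD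
  have key : ((D:ℝ):ℂ) * (tc f 2)^2
      = 2*((B₁:ℝ):ℂ)^3*((tc u 2 + (tc u 1)^2) + (tc v 2 + (tc v 1)^2)) := by
    rw [hD]
    push_cast
    linear_combination (2*((B₁:ℝ):ℂ)^2)*Ef2 + (2*((B₁:ℝ):ℂ)^2)*Eg2
      + (2*(((B₁:ℝ):ℂ)-((B₂:ℝ):ℂ))*((2-((α:ℝ):ℂ))*tc f 2 + ((B₁:ℝ):ℂ)*tc u 1))*Ef1
      + (2*(((B₁:ℝ):ℂ)-((B₂:ℝ):ℂ))*(((B₁:ℝ):ℂ)*tc v 1 - (2-((α:ℝ):ℂ))*tc f 2))*Eg1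
  -- take norms
  have hnormkey : |D| * ‖tc f 2‖^2 ≤ 4*B₁^3 := by
    have h1 : ‖((D:ℝ):ℂ) * (tc f 2)^2‖ = |D| * ‖tc f 2‖^2 := by
      rw [norm_mul, norm_pow, Complex.norm_real, Real.norm_eq_abs]
    have h2 : ‖(2*((B₁:ℝ):ℂ)^3*((tc u 2 + (tc u 1)^2) + (tc v 2 + (tc v 1)^2)))‖ ≤ 4*B₁^3 := by
      rw [norm_mul, norm_mul, norm_pow, Complex.norm_real, Real.norm_eq_abs,
        abs_of_pos hB₁pos]
      have h3 : ‖(2:ℂ)‖ = 2 := by norm_num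
      rw [h3]
      have h4 : ‖(tc u 2 + (tc u 1)^2) + (tc v 2 + (tc v 1)^2)‖ ≤ 2 := by
        calc ‖(tc u 2 + (tc u 1)^2) + (tc v 2 + (tc v 1)^2)‖
            ≤ ‖tc u 2 + (tc u 1)^2‖ + ‖tc v 2 + (tc v 1)^2‖ := norm_add_le _ _
          _ ≤ 1 + 1 := add_le_add Su Sv
          _ = 2 := by norm_num
      calc 2 * B₁^3 * ‖(tc u 2 + (tc u 1)^2) + (tc v 2 + (tc v 1)^2)‖
          ≤ 2 * B₁^3 * 2 := by
            refine mul_le_mul_of_nonneg_left h4 ?_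
            positivity
        _ = 4 * B₁^3 := by ring
    rw [← h1, key]
    exact h2
  have hDpos : 0 < |D| := abs_pos.mpr hne
  have hsq : ‖tc f 2‖^2 ≤ (2 * B₁ * Real.sqrt B₁ / Real.sqrt |D|)^2 := by
    have hRsq : (2 * B₁ * Real.sqrt B₁ / Real.sqrt |D|)^2 = 4*B₁^3/|D| := by
      rw [div_pow, mul_pow, mul_pow, Real.sq_sqrt hB₁pos.le, Real.sq_sqrt (abs_nonneg _)]
      ring
    rw [hRsq, le_div_iff₀ hDpos]
    calc ‖tc f 2‖^2 * |D| = |D| * ‖tc f 2‖^2 := mul_comm _ _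
      _ ≤ 4*B₁^3 := hnormkey
  have hR0 : 0 ≤ 2 * B₁ * Real.sqrt B₁ / Real.sqrt |D| := by positivity
  calc ‖tc f 2‖ = Real.sqrt (‖tc f 2‖^2) := (Real.sqrt_sq (norm_nonneg _)).symm
    _ ≤ Real.sqrt ((2 * B₁ * Real.sqrt B₁ / Real.sqrt |D|)^2) := Real.sqrt_le_sqrt hsq
    _ = 2 * B₁ * Real.sqrt B₁ / Real.sqrt |D| := Real.sqrt_sq hR0
end
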